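/- arXiv:1107.3392 — 8 statements merged into one kernel-verified Lean document; each statement's English description precedes it below -/
import Mathlib

section
/- Let π be a group and N a normal subgroup of π that is relatively perfect, i.e. ⁅π, N⁆ = N. Then the map on second group homology H₂(π; ℤ) → H₂(π/N; ℤ) (with trivial ℤ-coefficients) induced by the quotient homomorphism π → π/N is surjective. -/
/-! Second group homology with trivial `ℤ`-coefficients, defined via the
inhomogeneous bar complex `C_n(G) = ⊕_{G^n} ℤ` with the standard bar differential. -/

variable (G : Type*) [Group G]

/-- Degree-2 bar differential: `d(g, h) = [h] - [gh] + [g]`. -/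
noncomputable def barD2 : ((Fin 2 → G) →₀ ℤ) →ₗ[ℤ] ((Fin 1 → G) →₀ ℤ) :=
  Finsupp.lift _ ℤ _ fun p =>
    Finsupp.single ![p 1] 1 - Finsupp.single ![p 0 * p 1] 1 + Finsupp.single ![p 0] 1

/-- Degree-3 bar differential: `d(g, h, k) = [h, k] - [gh, k] + [g, hk] - [g, h]`. -/
noncomputable def barD3 : ((Fin 3 → G) →₀ ℤ) →ₗ[ℤ] ((Fin 2 → G) →₀ ℤ) :=
  Finsupp.lift _ ℤ _ fun p =>
    Finsupp.single ![p 1, p 2] 1 - Finsupp.single ![p 0 * p 1, p 2] 1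
      + Finsupp.single ![p 0, p 1 * p 2] 1 - Finsupp.single ![p 0, p 1] 1

/-- The second group homology `H₂(G; ℤ)` (trivial coefficients):
2-cycles modulo 3-boundaries in the bar complex. -/
noncomputable def H2 :=
  LinearMap.ker (barD2 G) ⧸
    (LinearMap.range (barD3 G)).comap (LinearMap.ker (barD2 G)).subtype

noncomputable instance : AddCommGroup (H2 G) := by delta H2; infer_instance
noncomputable instance : Module ℤ (H2 G) := by delta H2; infer_instance

variable {G} {H : Type*} [Group H]

/-- The chain map on bar `n`-chains induced by a group homomorphism. -/
noncomputable def barMap (f : G →* H) (n : ℕ) :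
    ((Fin n → G) →₀ ℤ) →ₗ[ℤ] ((Fin n → H) →₀ ℤ) :=
  Finsupp.lmapDomain ℤ ℤ fun p => f ∘ p

lemma barMap_single (f : G →* H) (n : ℕ) (p : Fin n → G) (b : ℤ) :
    barMap f n (Finsupp.single p b) = Finsupp.single (f ∘ p) b :=
  Finsupp.mapDomain_single

lemma barD2_single (p : Fin 2 → G) (b : ℤ) :
    barD2 G (Finsupp.single p b) =
      b • (Finsupp.single ![p 1] 1 - Finsupp.single ![p 0 * p 1] 1
        + Finsupp.single ![p 0] 1) := by
  simp [barD2, Finsupp.lift_apply, Finsupp.sum_single_index]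

lemma barD3_single (p : Fin 3 → G) (b : ℤ) :
    barD3 G (Finsupp.single p b) =
      b • (Finsupp.single ![p 1, p 2] 1 - Finsupp.single ![p 0 * p 1, p 2] 1
        + Finsupp.single ![p 0, p 1 * p 2] 1 - Finsupp.single ![p 0, p 1] 1) := by
  simp [barD3, Finsupp.lift_apply, Finsupp.sum_single_index]

lemma comp_vec1 (f : G →* H) (a : G) : f ∘ ![a] = ![f a] := by
  funext i
  fin_cases i
  simp

lemma comp_vec2 (f : G →* H) (a b : G) : f ∘ ![a, b] = ![f a, f b] := by
  funext i
  fin_cases i <;> simp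

lemma barMap_comm_d2 (f : G →* H) :
    (barD2 H).comp (barMap f 2) = (barMap f 1).comp (barD2 G) := by
  apply Finsupp.lhom_ext
  intro p b
  rw [LinearMap.comp_apply, LinearMap.comp_apply, barMap_single, barD2_single,
    barD2_single]
  simp only [map_smul, map_add, map_sub, barMap_single]
  simp [comp_vec1]

lemma barMap_comm_d3 (f : G →* H) :
    (barD3 H).comp (barMap f 3) = (barMap f 2).comp (barD3 G) := by
  apply Finsupp.lhom_ext
  intro p b
  rw [LinearMap.comp_apply, LinearMap.comp_apply, barMap_single, barD3_single,
    barD3_single]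
  simp only [map_smul, map_add, map_sub, barMap_single]
  simp [comp_vec2]

/-- The map `H₂(G; ℤ) → H₂(H; ℤ)` induced by a group homomorphism `f : G → H`,
by functoriality of group homology. -/
noncomputable def H2Map (f : G →* H) : H2 G →ₗ[ℤ] H2 H :=
  Submodule.mapQ _ _
    ((barMap f 2).restrict (p := LinearMap.ker (barD2 G))
      (q := LinearMap.ker (barD2 H)) (by
        intro x hx
        rw [LinearMap.mem_ker] at hx ⊢
        have := congrFun (congrArg DFunLike.coe (barMap_comm_d2 f)) x
        simp only [LinearMap.comp_apply] at this
        rw [this, hx, map_zero]))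
    (by
      intro x hx
      simp only [Submodule.mem_comap, Submodule.subtype_apply,
        LinearMap.mem_range, LinearMap.restrict_apply] at hx ⊢
      obtain ⟨y, hy⟩ := hx
      refine ⟨barMap f 3 y, ?_⟩
      have := congrFun (congrArg DFunLike.coe (barMap_comm_d3 f)) y
      simp only [LinearMap.comp_apply] at this
      rw [this, hy])


section Aux

/-- Basis 1-chain. -/
noncomputable def sg1 (a : G) : (Fin 1 → G) →₀ ℤ := Finsupp.single ![a] 1

/-- Basis 2-chain. -/
noncomputable def sg2 (a b : G) : (Fin 2 → G) →₀ ℤ := Finsupp.single ![a, b] 1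

lemma comp_vec1' {A B : Type*} (f : A → B) (a : A) : f ∘ ![a] = ![f a] := by
  funext i; fin_cases i; rfl

lemma comp_vec2' {A B : Type*} (f : A → B) (a b : A) : f ∘ ![a, b] = ![f a, f b] := by
  funext i; fin_cases i <;> rfl

lemma single_vec2 (a b : G) (c : ℤ) : Finsupp.single ![a, b] c = c • sg2 a b := by
  rw [sg2, Finsupp.smul_single, smul_eq_mul, mul_one]

lemma vec2_eta (p : Fin 2 → G) : p = ![p 0, p 1] := by
  funext i; fin_cases i <;> rfl

lemma single_eq_smul_sg2 (p : Fin 2 → G) (b : ℤ) :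
    Finsupp.single p b = b • sg2 (p 0) (p 1) := by
  rw [sg2, Finsupp.smul_single, smul_eq_mul, mul_one, ← vec2_eta]

lemma d2_sg (a b : G) : barD2 G (sg2 a b) = sg1 b - sg1 (a * b) + sg1 a := by
  rw [sg2, barD2_single]
  simp [sg1]

lemma d3_sg (a b c : G) :
    barD3 G (Finsupp.single ![a, b, c] 1) =
      sg2 b c - sg2 (a * b) c + sg2 a (b * c) - sg2 a b := by
  rw [barD3_single]
  simp [sg2]

lemma map_sg2 (f : G →* H) (a b : G) : barMap f 2 (sg2 a b) = sg2 (f a) (f b) := by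
  rw [sg2, barMap_single, comp_vec2' f, sg2]

lemma degL (x : G) : sg2 (1 : G) x - sg2 1 1 ∈ LinearMap.range (barD3 G) := by
  refine ⟨Finsupp.single ![1, 1, x] 1, ?_⟩
  rw [d3_sg]
  simp only [one_mul]
  abel

/-- Key lemma: for `n ∈ ⁅⊤, N⁆`, the 1-chain `[n]` is the boundary of a 2-chain
whose image in the quotient is `[1|1]` up to boundaries. -/
lemma exists_good_chain {π : Type*} [Group π] (N : Subgroup π) [N.Normal]
    {n : π} (hn : n ∈ ⁅(⊤ : Subgroup π), N⁆) :
    ∃ w : (Fin 2 → π) →₀ ℤ, barD2 π w = sg1 n ∧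
      barMap (QuotientGroup.mk' N) 2 w - sg2 (1 : π ⧸ N) 1 ∈
        LinearMap.range (barD3 (π ⧸ N)) := by
  have qone : ∀ x : π, x ∈ N → QuotientGroup.mk' N x = 1 := fun x hx =>
    (QuotientGroup.eq_one_iff x).mpr hx
  have hle : ⁅(⊤ : Subgroup π), N⁆ ≤ N := Subgroup.commutator_le_right ⊤ N
  rw [Subgroup.commutator_def] at hn
  induction hn using Subgroup.closure_induction with
  | mem c hc =>
    obtain ⟨g, -, m, hm, rfl⟩ := hc
    have hqm : QuotientGroup.mk' N m = 1 := qone m hm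
    refine ⟨sg2 m m⁻¹ - sg2 g (m * g⁻¹) - sg2 m g⁻¹ + sg2 g g⁻¹ + (2 : ℤ) • sg2 1 1
      - sg2 (g * m * g⁻¹) m⁻¹, ?_, ?_⟩
    · simp only [map_add, map_sub, map_smul, d2_sg, commutatorElement_def,
        mul_inv_cancel, mul_one, one_mul, ← mul_assoc]
      abel
    · have h2 : barMap (QuotientGroup.mk' N) 2
          (sg2 m m⁻¹ - sg2 g (m * g⁻¹) - sg2 m g⁻¹ + sg2 g g⁻¹ + (2 : ℤ) • sg2 1 1
            - sg2 (g * m * g⁻¹) m⁻¹) - sg2 (1 : π ⧸ N) 1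
          = -(sg2 (1 : π ⧸ N) ((QuotientGroup.mk' N g)⁻¹) - sg2 1 1) := by
        simp only [map_add, map_sub, map_smul, map_sg2, map_mul, map_inv, hqm, map_one,
          inv_one, one_mul, mul_one, mul_inv_cancel]
        abel
      rw [h2]
      exact neg_mem (degL _)
  | one =>
    refine ⟨sg2 1 1, ?_, ?_⟩
    · rw [d2_sg]; simp only [one_mul]; abel
    · simp only [map_sg2, map_one, sub_self]
      exact zero_mem _
  | mul x y hx hy ihx ihy =>
    obtain ⟨wx, dx, mx⟩ := ihx
    obtain ⟨wy, dy, my⟩ := ihy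
    have hxN : x ∈ N := hle (by rw [Subgroup.commutator_def]; exact hx)
    have hyN : y ∈ N := hle (by rw [Subgroup.commutator_def]; exact hy)
    refine ⟨wx + wy - sg2 x y, ?_, ?_⟩
    · simp only [map_add, map_sub, dx, dy, d2_sg]
      abel
    · have h2 : barMap (QuotientGroup.mk' N) 2 (wx + wy - sg2 x y) - sg2 (1 : π ⧸ N) 1
          = (barMap (QuotientGroup.mk' N) 2 wx - sg2 1 1)
            + (barMap (QuotientGroup.mk' N) 2 wy - sg2 1 1) := by
        simp only [map_add, map_sub, map_sg2, qone x hxN, qone y hyN]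
        abel
      rw [h2]
      exact add_mem mx my
  | inv x hx ihx =>
    obtain ⟨wx, dx, mx⟩ := ihx
    have hxN : x ∈ N := hle (by rw [Subgroup.commutator_def]; exact hx)
    refine ⟨sg2 x x⁻¹ + sg2 1 1 - wx, ?_, ?_⟩
    · simp only [map_add, map_sub, dx, d2_sg, mul_inv_cancel, one_mul]
      abel
    · have h2 : barMap (QuotientGroup.mk' N) 2 (sg2 x x⁻¹ + sg2 1 1 - wx) - sg2 (1 : π ⧸ N) 1
          = -(barMap (QuotientGroup.mk' N) 2 wx - sg2 1 1) := by
        simp only [map_add, map_sub, map_sg2, map_inv, qone x hxN, inv_one, map_one]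
        abel
      rw [h2]
      exact neg_mem mx

end Aux

/-- If `N` is a relatively perfect normal subgroup of `π`,
i.e. `⁅π, N⁆ = N`, then the induced map `H₂(π; ℤ) → H₂(π/N; ℤ)` on second group
homology (trivial `ℤ`-coefficients) is surjective. -/
theorem H2Map_surjective_of_relatively_perfect
    (π : Type*) [Group π] (N : Subgroup π) [N.Normal]
    (hN : ⁅(⊤ : Subgroup π), N⁆ = N) :
    Function.Surjective (H2Map (QuotientGroup.mk' N)) := by
  obtain ⟨s, hs⟩ := (QuotientGroup.mk'_surjective N).hasRightInverse
  have key : ∀ p : Fin 2 → π ⧸ N, ∃ w : (Fin 2 → π) →₀ ℤ,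
      barD2 π w = sg1 (s (p 0) * s (p 1) * (s (p 0 * p 1))⁻¹) ∧
      barMap (QuotientGroup.mk' N) 2 w - sg2 (1 : π ⧸ N) 1 ∈
        LinearMap.range (barD3 (π ⧸ N)) := by
    intro p
    apply exists_good_chain
    rw [hN, ← QuotientGroup.eq_one_iff]
    have hqs : ∀ x : π ⧸ N, ((s x : π) : π ⧸ N) = x := fun x => hs x
    rw [QuotientGroup.mk_mul, QuotientGroup.mk_mul, QuotientGroup.mk_inv, hqs, hqs, hqs]
    group
  choose w hw1 hw2 using key
  set L : ((Fin 2 → π ⧸ N) →₀ ℤ) →ₗ[ℤ] ((Fin 2 → π) →₀ ℤ) :=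
    Finsupp.lmapDomain ℤ ℤ (fun p => s ∘ p) with hLdef
  set E : ((Fin 2 → π ⧸ N) →₀ ℤ) →ₗ[ℤ] ((Fin 2 → π) →₀ ℤ) :=
    Finsupp.lift _ ℤ _ (fun p => w p) with hEdef
  have hL : ∀ (p : Fin 2 → π ⧸ N) (b : ℤ), L (Finsupp.single p b)
      = b • sg2 (s (p 0)) (s (p 1)) := by
    intro p b
    rw [hLdef, Finsupp.lmapDomain_apply, Finsupp.mapDomain_single,
      vec2_eta (s ∘ p), ← single_vec2]
    rfl
  have hE : ∀ (p : Fin 2 → π ⧸ N) (b : ℤ), E (Finsupp.single p b) = b • w p := by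
    intro p b
    rw [hEdef, Finsupp.lift_apply]
    exact Finsupp.sum_single_index (zero_smul ℤ _)
  set T : ((Fin 2 → π ⧸ N) →₀ ℤ) →ₗ[ℤ] ((Fin 2 → π) →₀ ℤ) :=
    Finsupp.lift _ ℤ _ (fun p =>
      sg2 (s (p 0) * s (p 1) * (s (p 0 * p 1))⁻¹) (s (p 0 * p 1))) with hTdef
  have hT : ∀ (p : Fin 2 → π ⧸ N) (b : ℤ), T (Finsupp.single p b)
      = b • sg2 (s (p 0) * s (p 1) * (s (p 0 * p 1))⁻¹) (s (p 0 * p 1)) := by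
    intro p b
    rw [hTdef, Finsupp.lift_apply]
    exact Finsupp.sum_single_index (zero_smul ℤ _)
  -- the corrected lift is a chain map into cycles
  have hA : (barD2 π).comp (L - T + E) =
      (Finsupp.lmapDomain ℤ ℤ (fun c : Fin 1 → π ⧸ N => s ∘ c)).comp (barD2 (π ⧸ N)) := by
    apply Finsupp.lhom_ext
    intro p b
    simp only [LinearMap.comp_apply, LinearMap.add_apply, LinearMap.sub_apply,
      hL, hE, hT, barD2_single, map_add, map_sub, map_smul, d2_sg, hw1,
      Finsupp.lmapDomain_apply, Finsupp.mapDomain_single, comp_vec1', sg1]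
    rw [show s (p 0) * s (p 1) * (s (p 0 * p 1))⁻¹ * s (p 0 * p 1)
        = s (p 0) * s (p 1) from inv_mul_cancel_right _ _]
    module
  have hB : ∀ x : (Fin 2 → π ⧸ N) →₀ ℤ,
      barMap (QuotientGroup.mk' N) 2 ((L - T + E) x) - x ∈
        LinearMap.range (barD3 (π ⧸ N)) := by
    intro x
    induction x using Finsupp.induction_linear with
    | zero => simp only [map_zero, sub_zero]; exact zero_mem _
    | add f g hf hg =>
      have hmem := add_mem hf hg
      have heq : barMap (QuotientGroup.mk' N) 2 ((L - T + E) (f + g)) - (f + g)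
          = (barMap (QuotientGroup.mk' N) 2 ((L - T + E) f) - f)
            + (barMap (QuotientGroup.mk' N) 2 ((L - T + E) g) - g) := by
        simp only [map_add]
        abel
      rw [heq]
      exact hmem
    | single p b =>
      have hq1 : QuotientGroup.mk' N (s (p 0) * s (p 1) * (s (p 0 * p 1))⁻¹) = 1 := by
        have : ∀ x : π ⧸ N, QuotientGroup.mk' N (s x) = x := fun x => hs x
        simp only [map_mul, map_inv, this]
        group
      have heq : barMap (QuotientGroup.mk' N) 2 ((L - T + E) (Finsupp.single p b)) -
          Finsupp.single p b
          = b • ((barMap (QuotientGroup.mk' N) 2 (w p) - sg2 1 1)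
            - (sg2 (1 : π ⧸ N) (p 0 * p 1) - sg2 1 1)) := by
        have hqs : ∀ x : π ⧸ N, QuotientGroup.mk' N (s x) = x := fun x => hs x
        simp only [LinearMap.add_apply, LinearMap.sub_apply, hL, hE, hT]
        simp only [map_add, map_sub, map_smul, map_sg2, hq1, hqs, single_eq_smul_sg2]
        module
      rw [heq]
      exact Submodule.smul_mem _ b (sub_mem (hw2 p) (degL _))
  intro ζ
  obtain ⟨z, hz⟩ : ∃ z : LinearMap.ker (barD2 (π ⧸ N)), Submodule.Quotient.mk z = ζ :=
    Submodule.Quotient.mk_surjective _ ζ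
  have hker : (L - T + E) z.1 ∈ LinearMap.ker (barD2 π) := by
    rw [LinearMap.mem_ker]
    have := LinearMap.congr_fun hA z.1
    simp only [LinearMap.comp_apply] at this
    rw [this, (LinearMap.mem_ker.mp z.2 : barD2 _ z.1 = 0), map_zero]
  refine ⟨Submodule.Quotient.mk ⟨(L - T + E) z.1, hker⟩, ?_⟩
  rw [← hz]
  unfold H2Map
  erw [Submodule.mapQ_apply, Submodule.Quotient.eq]
  simp only [Submodule.mem_comap, Submodule.subtype_apply, AddSubgroupClass.coe_sub,
    LinearMap.restrict_apply]
  exact hB z.1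
end

section
/- Let π be a group and N a normal subgroup of π. Suppose that the homomorphism Abelianization(π) → Abelianization(π/N) induced by the quotient map is injective, and that the induced map on second group homology H₂(π; ℤ) → H₂(π/N; ℤ) (trivial ℤ-coefficients) is surjective. Then N is relatively perfect in π, i.e. ⁅π, N⁆ = N. -/
/-! Second group homology with trivial `ℤ`-coefficients, defined via the
inhomogeneous bar complex `C_n(G) = ⊕_{G^n} ℤ` with the standard bar differential. -/

variable (G : Type*) [Group G]

variable {G} {H : Type*} [Group H]

set_option linter.unusedSectionVars false

-- NEW MATERIAL
lemma barD2_comp_barD3 (G : Type*) [Group G] : (barD2 G).comp (barD3 G) = 0 := by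
  apply Finsupp.lhom_ext
  intro p b
  rw [LinearMap.comp_apply, barD3_single, map_smul]
  simp only [map_add, map_sub, barD2_single, Matrix.cons_val_zero, Matrix.cons_val_one,
    Matrix.head_cons, LinearMap.zero_apply, smul_sub, smul_add, one_smul, mul_assoc]
  abel

namespace StallingsAux

open scoped commutatorElement

variable {π : Type*} [Group π] (N : Subgroup π) [N.Normal]

open scoped Classical in
noncomputable def sec : π ⧸ N → π := fun x => if x = 1 then 1 else x.out

lemma sec_spec (x : π ⧸ N) : (QuotientGroup.mk (sec N x) : π ⧸ N) = x := by
  unfold sec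
  split_ifs
  · rename_i h; rw [h]; rfl
  · exact QuotientGroup.out_eq' x

open scoped Classical in
lemma sec_one : sec N (1 : π ⧸ N) = 1 := by unfold sec; simp

def relK' : Subgroup N := (⁅(⊤ : Subgroup π), N⁆).subgroupOf N

instance : (relK' N).Normal := Subgroup.normal_subgroupOf

instance : CommGroup (N ⧸ relK' N) :=
  { (inferInstance : Group (N ⧸ relK' N)) with
    mul_comm := fun a b => by
      refine QuotientGroup.induction_on a fun x => QuotientGroup.induction_on b fun y => ?_
      rw [← QuotientGroup.mk_mul, ← QuotientGroup.mk_mul, QuotientGroup.eq]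
      rw [relK', Subgroup.mem_subgroupOf]
      have : (((x * y)⁻¹ * (y * x) : N) : π) = ⁅(y : π)⁻¹, (x : π)⁻¹⁆ := by
        push_cast; group
      rw [this]
      exact Subgroup.commutator_mem_commutator (Subgroup.mem_top _) (N.inv_mem x.2) }

noncomputable def cl (m : N) : Additive (N ⧸ relK' N) :=
  Additive.ofMul (QuotientGroup.mk m)

lemma cl_mul (m m' : N) : cl N (m * m') = cl N m + cl N m' := rfl

lemma cl_eq_zero_iff (m : N) : cl N m = 0 ↔ (m : π) ∈ ⁅(⊤ : Subgroup π), N⁆ := by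
  rw [cl, show (0 : Additive (N ⧸ relK' N)) = Additive.ofMul 1 from rfl]
  rw [Additive.ofMul.apply_eq_iff_eq, QuotientGroup.eq_one_iff, relK', Subgroup.mem_subgroupOf]

lemma cl_conj (g : π) (m : N) (h : g * m * g⁻¹ ∈ N) : cl N ⟨g * m * g⁻¹, h⟩ = cl N m := by
  rw [cl, cl, Additive.ofMul.apply_eq_iff_eq, QuotientGroup.eq, relK', Subgroup.mem_subgroupOf]
  have : (((⟨g * m * g⁻¹, h⟩ : N)⁻¹ * m : N) : π) = ⁅g, (m : π)⁻¹⁆ := by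
    push_cast; group
  rw [this]
  exact Subgroup.commutator_mem_commutator (Subgroup.mem_top _) (N.inv_mem m.2)

/-- `ν g = g · s(q g)⁻¹ ∈ N`. -/
noncomputable def nu (g : π) : N :=
  ⟨g * (sec N (QuotientGroup.mk g))⁻¹, by
    rw [← QuotientGroup.eq_one_iff]
    simp [sec_spec]⟩

/-- The factor set `F(a,b) = s(a) s(b) s(ab)⁻¹ ∈ N`. -/
noncomputable def Ff (a b : π ⧸ N) : N :=
  ⟨sec N a * sec N b * (sec N (a * b))⁻¹, by
    rw [← QuotientGroup.eq_one_iff]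
    simp only [QuotientGroup.mk_mul, QuotientGroup.mk_inv, sec_spec]
    group⟩

lemma cl_nu_mul (g h : π) :
    cl N (nu N (g * h)) = cl N (nu N g) + cl N (nu N h)
      + cl N (Ff N (QuotientGroup.mk g) (QuotientGroup.mk h)) := by
  have hmem : sec N (QuotientGroup.mk g) * (nu N h) * (sec N (QuotientGroup.mk g))⁻¹ ∈ N :=
    Subgroup.Normal.conj_mem ‹N.Normal› _ (nu N h).2 _
  have key : nu N (g * h)
      = nu N g * ⟨_, hmem⟩ * Ff N (QuotientGroup.mk g) (QuotientGroup.mk h) := by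
    apply Subtype.ext
    push_cast [nu, Ff]
    rw [QuotientGroup.mk_mul]
    group
  rw [key, cl_mul, cl_mul, cl_conj]

/-- `ν̄ : C₁(π) → N/⁅π,N⁆`. -/
noncomputable def nubar : ((Fin 1 → π) →₀ ℤ) →ₗ[ℤ] Additive (N ⧸ relK' N) :=
  Finsupp.lift _ ℤ _ fun p => cl N (nu N (p 0))

/-- `μ̄ : C₂(π/N) → N/⁅π,N⁆` given by the factor set. -/
noncomputable def mubar : ((Fin 2 → π ⧸ N) →₀ ℤ) →ₗ[ℤ] Additive (N ⧸ relK' N) :=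
  Finsupp.lift _ ℤ _ fun p => cl N (Ff N (p 0) (p 1))

lemma nubar_single (p : Fin 1 → π) (b : ℤ) :
    nubar N (Finsupp.single p b) = b • cl N (nu N (p 0)) := by
  simp [nubar, Finsupp.lift_apply, Finsupp.sum_single_index]

lemma mubar_single (p : Fin 2 → π ⧸ N) (b : ℤ) :
    mubar N (Finsupp.single p b) = b • cl N (Ff N (p 0) (p 1)) := by
  simp [mubar, Finsupp.lift_apply, Finsupp.sum_single_index]

/-- The key identity `ν̄ ∘ d₂ = - μ̄ ∘ q_*`. -/
lemma nubar_comp_barD2 :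
    (nubar N).comp (barD2 π) = -((mubar N).comp (barMap (QuotientGroup.mk' N) 2)) := by
  apply Finsupp.lhom_ext
  intro p b
  rw [LinearMap.comp_apply, LinearMap.neg_apply, LinearMap.comp_apply, barD2_single,
    barMap_single, map_smul, mubar_single]
  simp only [map_add, map_sub, nubar_single, one_smul, Matrix.cons_val_zero,
    Matrix.cons_val_one, Matrix.head_cons, Function.comp_apply]
  rw [show (QuotientGroup.mk' N) (p 0) = QuotientGroup.mk (p 0) from rfl,
    show (QuotientGroup.mk' N) (p 1) = QuotientGroup.mk (p 1) from rfl]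
  rw [cl_nu_mul]
  abel_nf
  rw [smul_comm]

/-- Any element of the commutator subgroup is, as a bar 1-chain, a boundary. -/
lemma single_mem_range_barD2 {n : π} (hn : n ∈ commutator π) :
    Finsupp.single ![n] (1 : ℤ) ∈ LinearMap.range (barD2 π) := by
  set R := LinearMap.range (barD2 π) with hR
  have hone : (Submodule.Quotient.mk (Finsupp.single ![(1:π)] (1:ℤ)) :
      ((Fin 1 → π) →₀ ℤ) ⧸ R) = 0 := by
    rw [Submodule.Quotient.mk_eq_zero]
    refine ⟨Finsupp.single ![1, 1] 1, ?_⟩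
    rw [barD2_single]
    simp
  have hmul : ∀ x y : π, (Submodule.Quotient.mk (Finsupp.single ![x * y] (1:ℤ)) :
      ((Fin 1 → π) →₀ ℤ) ⧸ R)
      = Submodule.Quotient.mk (Finsupp.single ![x] (1:ℤ))
        + Submodule.Quotient.mk (Finsupp.single ![y] (1:ℤ)) := by
    intro x y
    rw [← Submodule.Quotient.mk_add, Submodule.Quotient.eq]
    refine R.neg_mem_iff.mp ?_
    refine ⟨Finsupp.single ![x, y] 1, ?_⟩
    rw [barD2_single]
    simp only [Matrix.cons_val_zero, Matrix.cons_val_one, Matrix.head_cons, one_smul]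
    abel
  let φ : π →* Multiplicative (((Fin 1 → π) →₀ ℤ) ⧸ R) :=
  { toFun := fun g => Multiplicative.ofAdd (Submodule.Quotient.mk (Finsupp.single ![g] 1))
    map_one' := by simpa using congrArg Multiplicative.ofAdd hone
    map_mul' := fun x y => by simpa using congrArg Multiplicative.ofAdd (hmul x y) }
  have hker : φ n = 1 := Abelianization.commutator_subset_ker φ hn
  have : (Submodule.Quotient.mk (Finsupp.single ![n] (1:ℤ)) :
      ((Fin 1 → π) →₀ ℤ) ⧸ R) = 0 := hker
  rwa [Submodule.Quotient.mk_eq_zero] at this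

/-- Step 1: injectivity on abelianizations forces `N ≤ [π,π]`. -/
lemma mem_commutator_of_inj
    (h1 : Function.Injective (Abelianization.map (QuotientGroup.mk' N)))
    {n : π} (hn : n ∈ N) : n ∈ commutator π := by
  have h : Abelianization.map (QuotientGroup.mk' N) (Abelianization.of n) = 1 := by
    rw [Abelianization.map_of]
    have : QuotientGroup.mk' N n = 1 := (QuotientGroup.eq_one_iff n).mpr hn
    rw [this, map_one]
  have h2 := h1 (h.trans (map_one (Abelianization.map (QuotientGroup.mk' N))).symm)
  exact (QuotientGroup.eq_one_iff n).mp h2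

end StallingsAux


/-- If the quotient map `π → π/N` induces an injection on
abelianizations and a surjection `H₂(π; ℤ) → H₂(π/N; ℤ)` on second group homology
(trivial `ℤ`-coefficients), then `N` is relatively perfect in `π`: `⁅π, N⁆ = N`. -/
theorem relatively_perfect_of_H1_injective_H2_surjective
    (π : Type*) [Group π] (N : Subgroup π) [N.Normal]
    (h1 : Function.Injective (Abelianization.map (QuotientGroup.mk' N)))
    (h2 : Function.Surjective (H2Map (QuotientGroup.mk' N))) :
    ⁅(⊤ : Subgroup π), N⁆ = N := by
  refine le_antisymm (Subgroup.commutator_le_right ⊤ N) fun n hn => ?_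
  obtain ⟨c, hc⟩ :=
    StallingsAux.single_mem_range_barD2 (StallingsAux.mem_commutator_of_inj N h1 hn)
  have hqn : (QuotientGroup.mk n : π ⧸ N) = 1 := (QuotientGroup.eq_one_iff n).mpr hn
  have hzker : barMap (QuotientGroup.mk' N) 2 c - Finsupp.single ![1, 1] 1
      ∈ LinearMap.ker (barD2 (π ⧸ N)) := by
    rw [LinearMap.mem_ker, map_sub]
    have hcomm := congrFun (congrArg DFunLike.coe (barMap_comm_d2 (QuotientGroup.mk' N))) c
    simp only [LinearMap.comp_apply] at hcomm
    rw [hcomm, hc, barMap_single, comp_vec1, barD2_single]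
    simp only [Matrix.cons_val_zero, Matrix.cons_val_one, Matrix.head_cons,
      QuotientGroup.mk'_apply, hqn, mul_one, one_smul]
    abel
  set z : LinearMap.ker (barD2 (π ⧸ N)) := ⟨_, hzker⟩ with hzdef
  obtain ⟨w', hw'⟩ := h2 (Submodule.Quotient.mk z)
  obtain ⟨w, rfl⟩ := Submodule.Quotient.mk_surjective _ w'
  rw [H2Map] at hw'
  obtain ⟨u, hu⟩ := Submodule.mem_comap.mp ((Submodule.Quotient.eq _).mp hw')
  have hu' : barD3 (π ⧸ N) u = barMap (QuotientGroup.mk' N) 2 w.1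
      - (barMap (QuotientGroup.mk' N) 2 c - Finsupp.single ![1, 1] 1) := by
    rw [hu]
    rfl
  -- lift u along the (surjective) chain map in degree 3
  set ut : (Fin 3 → π) →₀ ℤ :=
    Finsupp.mapDomain (fun p i => StallingsAux.sec N (p i)) u with hutdef
  have hlift : barMap (QuotientGroup.mk' N) 3 ut = u := by
    rw [hutdef]
    show Finsupp.mapDomain _ _ = u
    rw [← Finsupp.mapDomain_comp]
    have : ((fun p => ⇑(QuotientGroup.mk' N) ∘ p) ∘ fun p (i : Fin 3) =>
        StallingsAux.sec N (p i)) = id := by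
      funext p
      funext i
      exact StallingsAux.sec_spec N (p i)
    rw [this, Finsupp.mapDomain_id]
  set c' : (Fin 2 → π) →₀ ℤ :=
    c - Finsupp.single ![1, 1] 1 - w.1 + barD3 π ut with hcdef
  have hpush : barMap (QuotientGroup.mk' N) 2 c' = 0 := by
    have hcomm3 := congrFun (congrArg DFunLike.coe (barMap_comm_d3 (QuotientGroup.mk' N))) ut
    simp only [LinearMap.comp_apply] at hcomm3
    rw [hcdef, map_add, map_sub, map_sub, ← hcomm3, hlift, hu', barMap_single, comp_vec2,
      map_one]
    abel
  have hd2 : barD2 π c' = Finsupp.single ![n] 1 - Finsupp.single ![1] 1 := by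
    have hdd := congrFun (congrArg DFunLike.coe (barD2_comp_barD3 π)) ut
    simp only [LinearMap.comp_apply, LinearMap.zero_apply] at hdd
    rw [hcdef, map_add, map_sub, map_sub, hc, hdd, LinearMap.mem_ker.mp w.2, barD2_single]
    simp only [Matrix.cons_val_zero, Matrix.cons_val_one, Matrix.head_cons, mul_one,
      one_smul]
    abel
  have key := congrFun (congrArg DFunLike.coe (StallingsAux.nubar_comp_barD2 N)) c'
  simp only [LinearMap.comp_apply, LinearMap.neg_apply] at key
  rw [hpush, map_zero, neg_zero, hd2, map_sub, StallingsAux.nubar_single,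
    StallingsAux.nubar_single] at key
  have hnu_n : StallingsAux.nu N n = ⟨n, hn⟩ := by
    apply Subtype.ext
    show n * (StallingsAux.sec N (QuotientGroup.mk n))⁻¹ = n
    rw [hqn, StallingsAux.sec_one, inv_one, mul_one]
  have hnu_one : StallingsAux.nu N (1 : π) = 1 := by
    apply Subtype.ext
    show (1 : π) * (StallingsAux.sec N (QuotientGroup.mk 1))⁻¹ = 1
    rw [show (QuotientGroup.mk (1 : π) : π ⧸ N) = 1 from rfl, StallingsAux.sec_one]
    simp
  simp only [Matrix.cons_val_zero, one_smul, hnu_n, hnu_one] at key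
  have hcl1 : StallingsAux.cl N (1 : N) = 0 := by
    simp [StallingsAux.cl]
  rw [hcl1, sub_zero] at key
  exact (StallingsAux.cl_eq_zero_iff N ⟨n, hn⟩).mp key
end

section
/- For every group G and every prime p, the group algebra (ℤ/pℤ)[G] (the monoid algebra of G over ℤ/pℤ) is G-dense with respect to the canonical monoid homomorphism σ : G → (ℤ/pℤ)[G] sending g to the corresponding group element of the group algebra. -/
/-- A unital ring `R` together with a monoid homomorphism `σ` from a group `G` to the
multiplicative monoid of `R` is *`G`-dense* if for every free right `R`-module `F`
(a module over `Rᵐᵒᵖ` that is free) and every additive subgroup `T` of `F` that is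
stable under right scalar multiplication by every `σ g` and that generates `F` as a
right `R`-module, there is an `R`-basis of `F` contained in `T`. -/
def IsGDense (G : Type*) [Group G] (R : Type*) [Ring R] (σ : G →* R) : Prop :=
  ∀ (F : Type) [AddCommGroup F] [Module Rᵐᵒᵖ F] [Module.Free Rᵐᵒᵖ F]
    (T : AddSubgroup F),
    (∀ (g : G) (x : F), x ∈ T → (MulOpposite.op (σ g)) • x ∈ T) →
    Submodule.span Rᵐᵒᵖ (T : Set F) = ⊤ →
    ∃ (ι : Type) (b : Module.Basis ι Rᵐᵒᵖ F), ∀ i, b i ∈ T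


/-- For every group `G` and prime `p`, the group algebra `(ℤ/pℤ)[G]`
is `G`-dense with respect to the canonical map `g ↦ g`. -/
theorem monoidAlgebra_zmod_isGDense (G : Type*) [Group G] (p : ℕ) [Fact p.Prime] :
    IsGDense G (MonoidAlgebra (ZMod p) G) (MonoidAlgebra.of (ZMod p) G) := by
  intro F _ _ _ T hT hspan
  set R := MonoidAlgebra (ZMod p) G
  have hsmul : ∀ (r : R) (x : F), x ∈ T → (MulOpposite.op r) • x ∈ T := by
    intro r
    refine MonoidAlgebra.induction_on (motive := fun r => ∀ x ∈ T, MulOpposite.op r • x ∈ T) r (fun g x hx => hT g x hx) ?_ ?_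
    · intro f g hf hg x hx
      rw [MulOpposite.op_add, add_smul]
      exact T.add_mem (hf x hx) (hg x hx)
    · intro c f hf x hx
      have hc : (c • f : R) = f * (algebraMap (ZMod p) R c) := by
        rw [Algebra.smul_def, Algebra.commutes]
      have hc2 : (algebraMap (ZMod p) R c) = ((c.val : ℕ) : R) := by
        rw [← map_natCast (algebraMap (ZMod p) R), ZMod.natCast_val, ZMod.cast_id]
      rw [hc, hc2, MulOpposite.op_mul, mul_smul, MulOpposite.op_natCast,
        Nat.cast_smul_eq_nsmul]
      exact AddSubgroup.nsmul_mem T (hf x hx) c.val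
  have hS : Submodule.span Rᵐᵒᵖ (T : Set F) = ⊤ := hspan
  set S : Submodule Rᵐᵒᵖ F :=
    { carrier := T
      add_mem' := fun ha hb => T.add_mem ha hb
      zero_mem' := T.zero_mem
      smul_mem' := fun c x hx => hsmul c.unop x hx } with hSdef
  have hTtop : ∀ x : F, x ∈ T := by
    intro x
    have : Submodule.span Rᵐᵒᵖ (T : Set F) = S := (Submodule.span_eq S)
    have h2 : S = ⊤ := by rw [← this, hS]
    have : x ∈ S := h2 ▸ Submodule.mem_top
    exact this
  obtain ⟨κ, b⟩ := Module.Free.exists_basis (R := Rᵐᵒᵖ) (M := F)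
  haveI : Nontrivial R := inferInstance
  refine ⟨Set.range ⇑b, b.reindex (Equiv.ofInjective ⇑b b.injective), fun i => ?_⟩
  simp only [Module.Basis.reindex_apply]
  rw [Equiv.apply_ofInjective_symm b.injective i]
  exact hTtop i
end

section
/- For every group G and every subring k of the rational numbers ℚ, the ring k is G-dense with respect to the trivial monoid homomorphism σ : G → k sending every g to 1. (In particular, ℤ is G-dense for every group G.) -/
lemma den_unit (k : Subring ℚ) (c : k) : IsUnit ((((c : ℚ).den : ℤ) : k)) := by
  set q : ℚ := (c : ℚ) with hq
  set A : ℤ := Int.gcdA q.num q.den with hA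
  set B : ℤ := Int.gcdB q.num q.den with hB
  have hg : Int.gcd q.num (q.den : ℤ) = 1 := by
    simpa [Int.gcd] using q.reduced
  have hbez : (1 : ℤ) = q.num * A + q.den * B := by
    have h := Int.gcd_eq_gcd_ab q.num (q.den : ℤ)
    rwa [hg, Nat.cast_one] at h
  have hbezQ : (1 : ℚ) = q.num * A + q.den * B := by exact_mod_cast hbez
  refine IsUnit.of_mul_eq_one (c * ((A : ℤ) : k) + ((B : ℤ) : k)) ?_
  have key : (((((q.den : ℤ) : k)) * (c * ((A : ℤ) : k) + ((B : ℤ) : k)) : k) : ℚ) = 1 := by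
    push_cast
    rw [← hq]
    have hnum : q * q.den = q.num := Rat.mul_den_eq_num q
    linear_combination (A : ℚ) * hnum - hbezQ
  exact_mod_cast key

lemma intop_smul (k : Subring ℚ) (F : Type) [AddCommGroup F] [Module kᵐᵒᵖ F]
    (n : ℤ) (x : F) : (MulOpposite.op ((n : k))) • x = n • x := by
  rw [MulOpposite.op_intCast, Int.cast_smul_eq_zsmul]

lemma clear_denom (k : Subring ℚ) (F : Type) [AddCommGroup F] [Module kᵐᵒᵖ F]
    (T : AddSubgroup F) (x : F) (hx : x ∈ Submodule.span kᵐᵒᵖ (T : Set F)) :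
    ∃ n : ℤ, IsUnit ((n : k)) ∧ (MulOpposite.op ((n : k))) • x ∈ T := by
  induction hx using Submodule.span_induction with
  | mem x hxT => exact ⟨1, by simp, by simpa [intop_smul] using hxT⟩
  | zero => exact ⟨1, by simp, by simpa using T.zero_mem⟩
  | add x y _ _ hx hy =>
      obtain ⟨n, hn, hnx⟩ := hx
      obtain ⟨m, hm, hmy⟩ := hy
      refine ⟨n * m, by push_cast; exact hn.mul hm, ?_⟩
      rw [smul_add]
      refine AddSubgroup.add_mem T ?_ ?_
      · rw [intop_smul, mul_comm, mul_smul, ← intop_smul k F n x]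
        exact AddSubgroup.zsmul_mem T hnx m
      · rw [intop_smul, mul_smul, ← intop_smul k F m y]
        exact AddSubgroup.zsmul_mem T hmy n
  | smul a x _ hx =>
      obtain ⟨n, hn, hnx⟩ := hx
      set c : k := a.unop with hc
      set d : ℤ := ((c : ℚ).den : ℤ) with hd
      refine ⟨n * d, by push_cast; exact hn.mul (den_unit k c), ?_⟩
      have hcd : c * (d : k) = (((c : ℚ).num : ℤ) : k) := by
        have h2 : ((c : ℚ) * ((c : ℚ).den : ℚ)) = ((c : ℚ).num : ℚ) :=
          Rat.mul_den_eq_num (c : ℚ)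
        ext
        push_cast
        exact h2
      have key : (MulOpposite.op (((n * d : ℤ) : k))) • a • x
          = ((c : ℚ).num) • ((n : ℤ) • x) := by
        rw [← MulOpposite.op_unop a, ← hc, smul_smul]
        rw [← MulOpposite.op_mul]
        push_cast
        rw [mul_left_comm c ((n : ℤ) : k) ((d : ℤ) : k), ← mul_assoc, mul_comm ((n : ℤ) : k) c, mul_assoc, mul_comm ((n : ℤ) : k), ← mul_assoc, hcd, mul_comm, ← Int.cast_mul,
          intop_smul, mul_comm, mul_smul]
      rw [key]
      exact AddSubgroup.zsmul_mem T (by rwa [intop_smul] at hnx) _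

/-- For every group `G` and every subring `k ⊆ ℚ`, the ring `k` is
`G`-dense with respect to the trivial homomorphism sending every `g` to `1`. -/
theorem subringRat_isGDense (G : Type*) [Group G] (k : Subring ℚ) :
    IsGDense G k 1 := by
  intro F _ _ _ T _ hspan
  obtain ⟨ι, b⟩ := Module.Free.exists_basis (R := kᵐᵒᵖ) (M := F)
  have h : ∀ i : ι, ∃ u : (kᵐᵒᵖ)ˣ, (u : kᵐᵒᵖ) • b i ∈ T := by
    intro i
    have hb : b i ∈ Submodule.span kᵐᵒᵖ (T : Set F) := by
      rw [hspan]; trivial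
    obtain ⟨n, hn, hnT⟩ := clear_denom k F T (b i) hb
    exact ⟨hn.op.unit, by rwa [hn.op.unit_spec]⟩
  choose w hw using h
  exact ⟨ι, b.unitsSMul w, fun i => by rw [Module.Basis.unitsSMul_apply]; exact hw i⟩
end

section
/- For every group G and every subring k of the rational numbers ℚ, the group algebra k[G] (the monoid algebra of G over k) is G-dense with respect to the canonical monoid homomorphism σ : G → k[G] sending g to the corresponding group element of the group algebra. -/
open MulOpposite

/-- Multiplying by (the image in `k` of) the denominator of `c : k ⊆ ℚ` gives its
numerator. -/
lemma den_mul_eq (k : Subring ℚ) (c : k) :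
    (((c:ℚ).den : ℤ) : k) * c = (((c:ℚ).num) : k) := by
  apply Subtype.ext
  push_cast
  rw [mul_comm]
  field_simp [(c:ℚ).num_div_den]
  exact (c:ℚ).mul_den_eq_num

/-- The denominator of an element of a subring `k ⊆ ℚ` is invertible in `k`. -/
lemma den_isUnit (k : Subring ℚ) (c : k) : IsUnit (((c:ℚ).den : ℤ) : k) := by
  set q : ℚ := (c : ℚ)
  have hcop : IsCoprime q.num (q.den : ℤ) := by
    rw [Int.isCoprime_iff_gcd_eq_one]
    simpa [Int.gcd] using q.reduced
  obtain ⟨a, b, hab⟩ := hcop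
  refine IsUnit.of_mul_eq_one ((a : k) * c + (b : k)) ?_
  calc ((q.den : ℤ) : k) * ((a : k) * c + (b : k))
      = (a:k) * (((q.den:ℤ):k) * c) + (b:k) * ((q.den:ℤ):k) := by ring
    _ = ((a * q.num + b * q.den : ℤ) : k) := by rw [den_mul_eq]; push_cast; ring
    _ = 1 := by rw [hab]; exact Int.cast_one

/-- Every element of `k[G]` can be multiplied by an integer that is invertible in `k`
so as to land in the additive subgroup generated by the group elements. -/
lemma exists_unit_zsmul_mem_closure (k : Subring ℚ) (G : Type*) [Group G]
    (r : MonoidAlgebra k G) :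
    ∃ n : ℤ, IsUnit ((n : ℤ) : k) ∧
      (n : ℤ) • r ∈ AddSubgroup.closure (Set.range (MonoidAlgebra.of k G)) := by
  induction r using MonoidAlgebra.induction with
  | zero => exact ⟨1, by simp, by simpa using AddSubgroup.zero_mem _⟩
  | single_add g c f hg hc ih =>
    obtain ⟨n₂, hn₂, hf⟩ := ih
    refine ⟨((c:ℚ).den : ℤ) * n₂, ?_, ?_⟩
    · rw [Int.cast_mul]
      exact (den_isUnit k c).mul hn₂
    · have hsingle : (((c:ℚ).den : ℤ)) • (MonoidAlgebra.single g c : MonoidAlgebra k G)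
          = ((c:ℚ).num) • (MonoidAlgebra.of k G g) := by
        rw [MonoidAlgebra.of_apply]
        rw [MonoidAlgebra.smul_single, MonoidAlgebra.smul_single]
        congr 1
        rw [zsmul_eq_mul, zsmul_eq_mul, mul_one]
        exact den_mul_eq k c
      rw [smul_add, mul_smul, mul_smul, smul_comm, hsingle]
      exact AddSubgroup.add_mem _
        (AddSubgroup.zsmul_mem _ (AddSubgroup.zsmul_mem _
          (AddSubgroup.subset_closure (Set.mem_range_self g)) _) _)
        (AddSubgroup.zsmul_mem _ hf _)

/-- Opposite-ring version of `exists_unit_zsmul_mem_closure`. -/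
lemma exists_unit_zsmul_mem_closure_op (k : Subring ℚ) (G : Type*) [Group G]
    (r : (MonoidAlgebra k G)ᵐᵒᵖ) :
    ∃ n : ℤ, IsUnit ((n : ℤ) : k) ∧
      (n : ℤ) • r ∈ AddSubgroup.closure
        (Set.range (fun g => op (MonoidAlgebra.of k G g))) := by
  obtain ⟨n, hn, hmem⟩ := exists_unit_zsmul_mem_closure k G r.unop
  refine ⟨n, hn, ?_⟩
  have h2 := AddSubgroup.mem_map_of_mem
    (opAddEquiv (α := MonoidAlgebra k G)).toAddMonoidHom hmem
  rw [AddMonoidHom.map_closure] at h2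
  have him : (opAddEquiv (α := MonoidAlgebra k G)).toAddMonoidHom ''
      (Set.range (MonoidAlgebra.of k G))
      = Set.range (fun g => op (MonoidAlgebra.of k G g)) := by
    ext x; simp [opAddEquiv]; exact Iff.rfl
  rw [him] at h2
  simp only [map_zsmul, AddEquiv.toAddMonoidHom_eq_coe, AddMonoidHom.coe_coe,
    opAddEquiv_apply, op_unop] at h2
  exact h2

/-- The set of `s : Rᵐᵒᵖ` whose action preserves `T` is an additive subgroup. -/
def stabGroup {R : Type*} [Ring R] {F : Type*} [AddCommGroup F] [Module Rᵐᵒᵖ F]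
    (T : AddSubgroup F) : AddSubgroup Rᵐᵒᵖ where
  carrier := {s | ∀ x ∈ T, s • x ∈ T}
  zero_mem' := fun x _ => by rw [zero_smul]; exact T.zero_mem
  add_mem' := fun {a b} ha hb x hx => by
    rw [add_smul]; exact T.add_mem (ha x hx) (hb x hx)
  neg_mem' := fun {a} ha x hx => by
    rw [neg_smul]; exact T.neg_mem (ha x hx)

/-- Every element of the span of `T` can be moved into `T` by a unit. -/
lemma exists_unit_smul_mem (G : Type*) [Group G] (k : Subring ℚ)
    (F : Type) [AddCommGroup F] [Module (MonoidAlgebra k G)ᵐᵒᵖ F]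
    (T : AddSubgroup F)
    (hT : ∀ (g : G) (x : F), x ∈ T → (op (MonoidAlgebra.of k G g)) • x ∈ T)
    (x : F) (hx : x ∈ Submodule.span (MonoidAlgebra k G)ᵐᵒᵖ (T : Set F)) :
    ∃ u : (MonoidAlgebra k G)ᵐᵒᵖˣ, (u : (MonoidAlgebra k G)ᵐᵒᵖ) • x ∈ T := by
  set R := MonoidAlgebra k G with hR
  -- the additive closure of the (opposite) group elements acts preserving `T`
  have hstab : ∀ s ∈ AddSubgroup.closure
      (Set.range (fun g => op (MonoidAlgebra.of k G g))), ∀ y ∈ T, s • y ∈ T := by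
    have : AddSubgroup.closure (Set.range (fun g => op (MonoidAlgebra.of k G g)))
        ≤ stabGroup T := by
      rw [AddSubgroup.closure_le]
      rintro s ⟨g, rfl⟩
      exact fun y hy => hT g y hy
    exact fun s hs y hy => this hs y hy
  -- units out of invertible integers
  have hunit : ∀ n : ℤ, IsUnit ((n : ℤ) : k) → IsUnit ((n : ℤ) : Rᵐᵒᵖ) := by
    intro n hn
    have h1 := hn.map (algebraMap k R)
    rw [map_intCast] at h1
    have h2 := h1.op
    rwa [op_intCast] at h2
  induction hx using Submodule.span_induction with
  | mem y hy => exact ⟨1, by simpa using hy⟩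
  | zero => exact ⟨1, by simpa using T.zero_mem⟩
  | add y z _ _ hy hz =>
    obtain ⟨u, hu⟩ := hy
    obtain ⟨v, hv⟩ := hz
    obtain ⟨n, hn, hs⟩ := exists_unit_zsmul_mem_closure_op k G ((u : Rᵐᵒᵖ) * ↑v⁻¹)
    obtain ⟨ν, hν⟩ := hunit n hn
    refine ⟨ν * u, ?_⟩
    rw [smul_add]
    refine T.add_mem ?_ ?_
    · have : ((ν * u : Rᵐᵒᵖˣ) : Rᵐᵒᵖ) • y = (n : ℤ) • ((u : Rᵐᵒᵖ) • y) := by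
        rw [Units.val_mul, hν, mul_smul, Int.cast_smul_eq_zsmul]
      rw [this]
      exact T.zsmul_mem hu n
    · have hkey : ((ν * u : Rᵐᵒᵖˣ) : Rᵐᵒᵖ)
          = ((n : ℤ) • ((u : Rᵐᵒᵖ) * ↑v⁻¹)) * (v : Rᵐᵒᵖ) := by
        rw [Units.val_mul, hν, smul_mul_assoc, v.inv_mul_cancel_right,
          zsmul_eq_mul]
      rw [hkey, mul_smul]
      exact hstab _ hs _ hv
  | smul a y _ hy =>
    obtain ⟨u, hu⟩ := hy
    obtain ⟨n, hn, hs⟩ := exists_unit_zsmul_mem_closure_op k G (a * ↑u⁻¹)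
    obtain ⟨ν, hν⟩ := hunit n hn
    refine ⟨ν, ?_⟩
    have hkey : (ν : Rᵐᵒᵖ) * a = ((n : ℤ) • (a * ↑u⁻¹)) * (u : Rᵐᵒᵖ) := by
      rw [hν, smul_mul_assoc, u.inv_mul_cancel_right, zsmul_eq_mul]
    rw [smul_smul, hkey, mul_smul]
    exact hstab _ hs _ hu

/-- For every group `G` and every subring `k ⊆ ℚ`, the group algebra
`k[G]` is `G`-dense with respect to the canonical map `g ↦ g`. -/
theorem monoidAlgebra_subringRat_isGDense (G : Type*) [Group G] (k : Subring ℚ) :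
    IsGDense G (MonoidAlgebra k G) (MonoidAlgebra.of k G) := by
  intro F _ _ _ T hT hspan
  have key : ∀ x : F, ∃ u : (MonoidAlgebra k G)ᵐᵒᵖˣ,
      (u : (MonoidAlgebra k G)ᵐᵒᵖ) • x ∈ T := by
    intro x
    refine exists_unit_smul_mem G k F T hT x ?_
    rw [hspan]; trivial
  let b := Module.Free.chooseBasis (MonoidAlgebra k G)ᵐᵒᵖ F
  choose u hu using fun i => key (b i)
  refine ⟨_, b.unitsSMul u, fun i => ?_⟩
  rw [Module.Basis.unitsSMul_apply]
  exact hu i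
end

section
/- Let R be a unital ring that is right Steinitz, i.e., every linearly independent subset of every free right R-module can be extended to a basis of that module. Then for every group G and every monoid homomorphism σ : G → R into the multiplicative monoid of R, the ring R is G-dense with respect to σ. -/
/-- A unital ring `R` is *right Steinitz* if every linearly independent subset of any
free right `R`-module extends to a basis of that module. -/
def IsRightSteinitz (R : Type*) [Ring R] : Prop :=
  ∀ (F : Type) [AddCommGroup F] [Module Rᵐᵒᵖ F] [Module.Free Rᵐᵒᵖ F]
    (s : Set F), LinearIndependent Rᵐᵒᵖ ((↑) : s → F) →
    ∃ (ι : Type) (b : Module.Basis ι Rᵐᵒᵖ F), s ⊆ Set.range b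

universe u

section Aux

variable {S : Type u} [Ring S]

/-- The Steinitz hypothesis, phrased for an arbitrary ring `S` acting on the left. -/
def StHyp (S : Type u) [Ring S] : Prop :=
  ∀ (F : Type) [AddCommGroup F] [Module S F] [Module.Free S F]
    (s : Set F), LinearIndependent S ((↑) : s → F) →
    ∃ (ι : Type) (b : Module.Basis ι S F), s ⊆ Set.range b

lemma lin_map_eq (g : S →ₗ[S] S) (x : S) : g x = x * g 1 := by
  conv_lhs => rw [← mul_one x, ← smul_eq_mul, map_smul, smul_eq_mul]

lemma li_singleton {V : Type u} [AddCommGroup V] [Module S V] {v : V}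
    (h : ∀ c : S, c • v = 0 → c = 0) :
    LinearIndependent S ((↑) : ({v} : Set V) → V) := by
  rw [linearIndependent_subtype_iff, linearIndepOn_iff]
  intro l hl hl0
  have hsupp := (Finsupp.mem_supported S l).mp hl
  have hl' : l = Finsupp.single v (l v) := by
    ext a
    by_cases ha : a = v
    · subst ha; simp
    · have hm : a ∉ l.support := fun hm => ha (hsupp hm)
      rw [Finsupp.notMem_support_iff.mp hm, Finsupp.single_eq_of_ne' fun hh => ha hh.symm]
  rw [hl', Finsupp.linearCombination_single] at hl0
  have : l v = 0 := h _ hl0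
  rw [hl', this, Finsupp.single_zero]

lemma ext_basis (hSt : StHyp S) (V : Type u) [AddCommGroup V] [Module S V]
    [Module.Free S V] [Small.{0} V] (Y : Set V)
    (h : LinearIndependent S ((↑) : Y → V)) :
    ∃ (ι : Type) (b : Module.Basis ι S V), Y ⊆ Set.range b := by
  let e : Shrink.{0} V ≃ₗ[S] V := Shrink.linearEquiv S V
  have hfree : Module.Free S (Shrink.{0} V) := Module.Free.of_equiv e.symm
  have h2 : LinearIndependent S (e.symm.toLinearMap ∘ ((↑) : Y → V)) :=
    h.map' e.symm.toLinearMap e.symm.ker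
  obtain ⟨ι, b, hb⟩ := hSt (Shrink.{0} V) (Set.range (e.symm.toLinearMap ∘ ((↑) : Y → V)))
    h2.linearIndepOn_id
  refine ⟨ι, b.map e, fun y hy => ?_⟩
  obtain ⟨i, hi⟩ := hb ⟨⟨y, hy⟩, rfl⟩
  exact ⟨i, by rw [Module.Basis.map_apply, hi]; simp⟩

end Aux

section DF
variable {S : Type u} [Ring S]

lemma df (hSt : StHyp S) [Small.{0} S] {v r : S} (hvr : v * r = 1) : r * v = 1 := by
  classical
  rcases subsingleton_or_nontrivial S with hs | hnt
  · exact Subsingleton.elim _ _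
  have hv : ∀ c : S, c • v = 0 → c = 0 := by
    intro c hc
    rw [smul_eq_mul] at hc
    have : c * v * r = 0 * r := by rw [hc]
    rwa [mul_assoc, hvr, mul_one, zero_mul] at this
  obtain ⟨ι, b, hb⟩ := ext_basis hSt S {v} (li_singleton hv)
  obtain ⟨i₀, hi₀⟩ := hb (Set.mem_singleton v)
  by_cases hcase : ∀ j : ι, b j = v
  · have hsub : Set.range b ⊆ {v} := by rintro _ ⟨j, rfl⟩; exact hcase j
    have htop : (⊤ : Submodule S S) ≤ Submodule.span S {v} := by
      rw [← b.span_eq]; exact Submodule.span_mono hsub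
    obtain ⟨c, hcv⟩ := Submodule.mem_span_singleton.mp (htop Submodule.mem_top : (1:S) ∈ _)
    rw [smul_eq_mul] at hcv
    have hr : r = c := by rw [← one_mul r, ← hcv, mul_assoc, hvr, mul_one]
    rw [hr, hcv]
  · exfalso
    push_neg at hcase
    obtain ⟨j, hj⟩ := hcase
    have hij : i₀ ≠ j := fun h => hj (h ▸ hi₀)
    set z := b j with hz
    obtain ⟨a0, ha0⟩ : ∃ a0, b.coord j 1 = a0 := ⟨_, rfl⟩
    have hva0 : v * a0 = 0 := by
      have h1 : b.coord j v = 0 := by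
        rw [← hi₀, Module.Basis.coord_apply, Module.Basis.repr_self_apply, if_neg hij]
      rw [← ha0, ← lin_map_eq (b.coord j) v]; exact h1
    have hza0 : z * a0 = 1 := by
      have h1 : b.coord j z = 1 := by
        rw [Module.Basis.coord_apply, Module.Basis.repr_self_apply, if_pos rfl]
      rw [← ha0, ← lin_map_eq (b.coord j) z]; exact h1
    -- the infinite independent family
    have key : ∀ (N : ℕ) (c : ℕ → S),
        (∑ n ∈ Finset.range N, c n * (z * v ^ n)) = 0 → ∀ n < N, c n = 0 := by
      intro N
      induction N with
      | zero => exact fun c _ n hn => absurd hn (Nat.not_lt_zero n)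
      | succ N ih =>
        intro c hc
        have hc0 : c 0 = 0 := by
          have h1 : (∑ n ∈ Finset.range (N+1), c n * (z * v ^ n)) * a0 = 0 := by
            rw [hc, zero_mul]
          rw [Finset.sum_mul, Finset.sum_range_succ'] at h1
          have hterm : ∀ n, c (n+1) * (z * v ^ (n+1)) * a0 = 0 := by
            intro n
            simp only [pow_succ, ← mul_assoc]
            rw [mul_assoc (c (n+1) * z * v ^ n) v a0, hva0, mul_zero]
          have hterm0 : c 0 * (z * v ^ 0) * a0 = c 0 := by
            simp only [pow_zero, mul_one, ← mul_assoc]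
            rw [mul_assoc (c 0) z a0, hza0, mul_one]
          rw [Finset.sum_congr rfl (fun n _ => hterm n), Finset.sum_const_zero, zero_add,
            hterm0] at h1
          exact h1
        have hshift : ∑ n ∈ Finset.range N, c (n+1) * (z * v ^ n) = 0 := by
          have h2 : (∑ n ∈ Finset.range (N+1), c n * (z * v ^ n)) * r = 0 := by
            rw [hc, zero_mul]
          rw [Finset.sum_mul, Finset.sum_range_succ'] at h2
          have hterm : ∀ n, c (n+1) * (z * v ^ (n+1)) * r = c (n+1) * (z * v ^ n) := by
            intro n
            simp only [pow_succ, ← mul_assoc]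
            rw [mul_assoc (c (n+1) * z * v ^ n) v r, hvr, mul_one]
          rw [hc0, zero_mul, zero_mul, add_zero, Finset.sum_congr rfl fun n _ => hterm n] at h2
          exact h2
        intro n hn
        match n with
        | 0 => exact hc0
        | (m+1) => exact ih (fun k => c (k+1)) hshift m (Nat.lt_of_succ_lt_succ hn)
    have hyind : LinearIndependent S (fun n : ℕ => z * v ^ n) := by
      rw [linearIndependent_iff']
      intro t g hrel i hit
      set N := (t.sup id) + 1 with hN
      have hsub : t ⊆ Finset.range N :=
        fun m hm => Finset.mem_range.mpr (Nat.lt_succ_of_le (Finset.le_sup (f := id) hm))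
      have hrel' : ∑ n ∈ Finset.range N, (if n ∈ t then g n else 0) * (z * v ^ n) = 0 := by
        rw [← Finset.sum_subset hsub (fun n _ hn => by rw [if_neg hn, zero_mul]), ← hrel]
        exact Finset.sum_congr rfl fun n hn => by rw [if_pos hn, smul_eq_mul]
      have := key N _ hrel' i (Finset.mem_range.mp (hsub hit))
      rwa [if_pos hit] at this
    have hyinj : Function.Injective (fun n : ℕ => z * v ^ n) := hyind.injective
    obtain ⟨ι₂, b₂, hb₂⟩ := ext_basis hSt S (Set.range fun n : ℕ => z * v ^ n)
      hyind.linearIndepOn_id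
    have hbn : ∀ n : ℕ, ∃ i, b₂ i = z * v ^ n := fun n => hb₂ ⟨n, rfl⟩
    choose κ hκ using hbn
    have hκinj : Function.Injective κ := by
      intro n m h
      exact hyinj (show z * v ^ n = z * v ^ m by rw [← hκ n, ← hκ m, h])
    haveI : Infinite ι₂ := Infinite.of_injective κ hκinj
    have hnotall : ¬ ∀ n : ℕ, κ n ∈ (b₂.repr 1).support := by
      intro hall
      have hfin : (Set.range κ).Finite :=
        Set.Finite.subset (b₂.repr 1).support.finite_toSet (by rintro _ ⟨n, rfl⟩; exact hall n)
      exact (Set.infinite_range_of_injective hκinj) hfin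
    push_neg at hnotall
    obtain ⟨p, hp⟩ := hnotall
    have h0 : b₂.coord (κ p) 1 = 0 := by
      rw [Module.Basis.coord_apply]; exact Finsupp.notMem_support_iff.mp hp
    have h1 : b₂.coord (κ p) (z * v ^ p) = 1 := by
      rw [← hκ p, Module.Basis.coord_apply, Module.Basis.repr_self_apply, if_pos rfl]
    rw [lin_map_eq, h0, mul_zero] at h1
    exact zero_ne_one h1

end DF

section Units
variable {S : Type u} [Ring S]

lemma unit_of_left_inv (hSt : StHyp S) [Small.{0} S] {w u : S} (h : w * u = 1) : IsUnit u :=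
  ⟨⟨u, w, df hSt h, h⟩, rfl⟩

lemma mul_nonunit (hSt : StHyp S) [Small.{0} S] {u : S} (hu : ¬IsUnit u) (c : S) :
    ¬IsUnit (c * u) := by
  intro h
  obtain ⟨x, hx⟩ := h
  have h1 : ((x⁻¹ : Sˣ) * c : S) * u = 1 := by
    rw [mul_assoc, ← hx, Units.inv_mul]
  exact hu (unit_of_left_inv hSt h1)

end Units

section Dich
variable {S : Type u} [Ring S]

lemma dichotomy (hSt : StHyp S) [Small.{0} S] (a : S) : IsNilpotent a ∨ IsUnit a := by
  classical
  rcases subsingleton_or_nontrivial S with hs | hnt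
  · exact Or.inr (isUnit_of_subsingleton a)
  haveI : Small.{0} (ℕ →₀ S) :=
    small_of_injective (f := ((⇑) : (ℕ →₀ S) → (ℕ → S))) DFunLike.coe_injective
  set ε : ℕ → (ℕ →₀ S) := fun n => Finsupp.single n (1 : S) with hε
  set x : ℕ → (ℕ →₀ S) := fun n => ε n - a • ε (n + 1) with hx
  -- coordinates of linear combinations of the `x n`
  have hx_coord : ∀ n m : ℕ, (x n) m =
      (if n = m then (1:S) else 0) - (if n + 1 = m then a else 0) := by
    intro n m
    simp [hx, hε, Finsupp.single_apply, Finsupp.smul_single]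
  have hsum0 : ∀ (t : Finset ℕ) (g : ℕ → S),
      ((∑ n ∈ t, g n • x n) : ℕ →₀ S) 0 = (if 0 ∈ t then g 0 else 0) := by
    intro t g
    rw [Finsupp.finset_sum_apply]
    have : ∀ n ∈ t, (g n • x n) 0 = if n = 0 then g n else 0 := by
      intro n _
      rw [Finsupp.smul_apply, hx_coord, smul_eq_mul]
      by_cases h : n = 0 <;> simp [h]
    rw [Finset.sum_congr rfl this, Finset.sum_ite_eq' t 0 g]
  have hsumsucc : ∀ (t : Finset ℕ) (g : ℕ → S) (m : ℕ),
      ((∑ n ∈ t, g n • x n) : ℕ →₀ S) (m + 1) =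
        (if m + 1 ∈ t then g (m+1) else 0) - (if m ∈ t then g m else 0) * a := by
    intro t g m
    rw [Finsupp.finset_sum_apply]
    have : ∀ n ∈ t, (g n • x n) (m+1) =
        (if n = m + 1 then g n else 0) - (if n = m then g n * a else 0) := by
      intro n _
      rw [Finsupp.smul_apply, hx_coord, smul_eq_mul, mul_sub]
      have h3 : (n + 1 = m + 1) ↔ (n = m) := by omega
      by_cases h1 : n = m + 1 <;> by_cases h2 : n = m
      · exfalso; omega
      · simp [h1, h2, h3]
      · simp [h1, h2, h3]
      · simp [h1, h2, h3]
    rw [Finset.sum_congr rfl this, Finset.sum_sub_distrib,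
      Finset.sum_ite_eq' t (m+1) g, Finset.sum_ite_eq' t m (fun n => g n * a)]
    congr 1
    by_cases h : m ∈ t <;> simp [h]
  have hxind : LinearIndependent S x := by
    rw [linearIndependent_iff']
    intro t g hrel i hit
    have h0 : (if 0 ∈ t then g 0 else 0) = 0 := by
      rw [← hsum0 t g, hrel]; rfl
    have hstep : ∀ m, (if m + 1 ∈ t then g (m+1) else 0) = (if m ∈ t then g m else 0) * a := by
      intro m
      have := hsumsucc t g m
      rw [hrel] at this
      have h2 : (0 : ℕ →₀ S) (m+1) = 0 := rfl
      rw [h2] at this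
      exact sub_eq_zero.mp this.symm
    have hall : ∀ m, (if m ∈ t then g m else 0) = 0 := by
      intro m
      induction m with
      | zero => exact h0
      | succ m ih => rw [hstep, ih, zero_mul]
    have := hall i
    rwa [if_pos hit] at this
  have hxinj : Function.Injective x := hxind.injective
  obtain ⟨ι, b, hbx⟩ := ext_basis hSt (ℕ →₀ S) (Set.range x) hxind.linearIndepOn_id
  set P : Submodule S (ℕ →₀ S) := Submodule.span S (Set.range x) with hP
  have heps : ∀ m k : ℕ, ε m - (a ^ k) • ε (m + k) ∈ P := by
    intro m k
    induction k with
    | zero => simp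
    | succ k ih =>
      have hx' : a ^ k • x (m + k) ∈ P :=
        Submodule.smul_mem _ _ (Submodule.subset_span ⟨m + k, rfl⟩)
      have hadd := Submodule.add_mem _ ih hx'
      convert hadd using 1
      show ε m - a ^ (k+1) • ε (m + (k+1)) =
        (ε m - a ^ k • ε (m + k)) + a ^ k • (ε (m+k) - a • ε (m+k+1))
      rw [smul_sub, smul_smul, ← pow_succ]
      abel
  have hcyc : ∀ w : ℕ →₀ S, ∃ (n : ℕ) (c : S), w - c • ε n ∈ P := by
    have key : ∀ (t : Finset ℕ) (f : ℕ → S), ∃ (n : ℕ) (c : S),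
        (∑ i ∈ t, f i • ε i) - c • ε n ∈ P := by
      intro t
      induction t using Finset.induction_on with
      | empty => exact fun f => ⟨0, 0, by simp⟩
      | @insert i t hit ih =>
        intro f
        obtain ⟨n, c, hnc⟩ := ih f
        refine ⟨n + i, f i * a ^ n + c * a ^ i, ?_⟩
        have h1 : f i • (ε i - a ^ n • ε (i + n)) ∈ P := Submodule.smul_mem _ _ (heps i n)
        have h2 : c • (ε n - a ^ i • ε (n + i)) ∈ P := Submodule.smul_mem _ _ (heps n i)
        have hadd := Submodule.add_mem _ (Submodule.add_mem _ hnc h1) h2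
        convert hadd using 1
        rw [Finset.sum_insert hit, smul_sub, smul_sub, smul_smul, smul_smul, add_smul,
          show i + n = n + i from Nat.add_comm i n]
        abel
    intro w
    obtain ⟨n, c, h⟩ := key w.support (⇑w)
    refine ⟨n, c, ?_⟩
    have hw : ∑ i ∈ w.support, w i • ε i = w := by
      conv_rhs => rw [← Finsupp.sum_single w]
      rw [Finsupp.sum]
      exact Finset.sum_congr rfl fun i _ => by rw [hε]; rw [Finsupp.smul_single, smul_eq_mul, mul_one]
    rwa [hw] at h
  have hcoordP : ∀ (i : ι), b i ∉ Set.range x → ∀ p ∈ P, b.coord i p = 0 := by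
    intro i hi p hp
    have hker : P ≤ LinearMap.ker (b.coord i) := by
      rw [hP, Submodule.span_le]
      rintro _ ⟨n, rfl⟩
      obtain ⟨i', hi'⟩ := hbx ⟨n, rfl⟩
      have hne : i' ≠ i := fun h => hi (h ▸ ⟨n, hi'.symm⟩)
      rw [SetLike.mem_coe, LinearMap.mem_ker, ← hi', Module.Basis.coord_apply,
        Module.Basis.repr_self_apply, if_neg hne]
    exact LinearMap.mem_ker.mp (hker hp)
  by_cases hall : ∀ i : ι, b i ∈ Set.range x
  · left
    have htop : ∀ w : ℕ →₀ S, w ∈ P := by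
      intro w
      have h1 : (⊤ : Submodule S (ℕ →₀ S)) ≤ P := by
        rw [← b.span_eq]
        exact Submodule.span_le.mpr (by rintro _ ⟨i, rfl⟩; exact Submodule.subset_span (hall i))
      exact h1 Submodule.mem_top
    obtain ⟨cc, hcc⟩ := Finsupp.mem_span_range_iff_exists_finsupp.mp (hP ▸ htop (ε 0))
    have hcc' : ∑ i ∈ cc.support, cc i • x i = ε 0 := hcc
    have hc0 : cc 0 = 1 := by
      have := hsum0 cc.support (⇑cc)
      rw [hcc'] at this
      have h1 : (ε 0) 0 = 1 := by simp [hε]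
      rw [h1] at this
      by_cases h : 0 ∈ cc.support
      · rw [if_pos h] at this; exact this.symm
      · rw [if_neg h] at this
        exact absurd this one_ne_zero
    have hstep : ∀ m, cc (m+1) = cc m * a := by
      intro m
      have := hsumsucc cc.support (⇑cc) m
      rw [hcc'] at this
      have h1 : (ε 0) (m+1) = 0 := by simp [hε]
      rw [h1] at this
      have h2 : (if m + 1 ∈ cc.support then cc (m+1) else 0) = cc (m+1) := by
        by_cases h : m + 1 ∈ cc.support
        · rw [if_pos h]
        · rw [if_neg h, Finsupp.notMem_support_iff.mp h]
      have h3 : (if m ∈ cc.support then cc m else 0) = cc m := by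
        by_cases h : m ∈ cc.support
        · rw [if_pos h]
        · rw [if_neg h, Finsupp.notMem_support_iff.mp h]
      rw [h2, h3] at this
      exact sub_eq_zero.mp this.symm
    have hpow : ∀ m, cc m = a ^ m := by
      intro m
      induction m with
      | zero => rw [hc0, pow_zero]
      | succ m ih => rw [hstep, ih, pow_succ]
    obtain ⟨m, hm⟩ := Infinite.exists_notMem_finset cc.support
    exact ⟨m, by rw [← hpow m, Finsupp.notMem_support_iff.mp hm]⟩
  · right
    push_neg at hall
    obtain ⟨j₁, hj₁⟩ := hall
    by_cases htwo : ∃ j₂, b j₂ ∉ Set.range x ∧ j₂ ≠ j₁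
    · exfalso
      obtain ⟨j₂, hj₂, hne⟩ := htwo
      obtain ⟨n₁, c₁, h1⟩ := hcyc (b j₁)
      obtain ⟨n₂, c₂, h2⟩ := hcyc (b j₂)
      have h1' : b j₁ - (c₁ * a ^ n₂) • ε (n₁ + n₂) ∈ P := by
        have hadd := Submodule.add_mem _ h1 (Submodule.smul_mem _ c₁ (heps n₁ n₂))
        convert hadd using 1
        rw [smul_sub, smul_smul]
        abel
      have h2' : b j₂ - (c₂ * a ^ n₁) • ε (n₁ + n₂) ∈ P := by
        have hadd := Submodule.add_mem _ h2 (Submodule.smul_mem _ c₂ (heps n₂ n₁))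
        convert hadd using 1
        rw [smul_sub, smul_smul, show n₂ + n₁ = n₁ + n₂ from Nat.add_comm n₂ n₁]
        abel
      have e11 : c₁ * a ^ n₂ * (b.coord j₁ (ε (n₁ + n₂))) = 1 := by
        have := hcoordP j₁ hj₁ _ h1'
        rw [map_sub, map_smul, smul_eq_mul, Module.Basis.coord_apply, Module.Basis.repr_self_apply,
          if_pos rfl] at this
        have := sub_eq_zero.mp this
        exact this.symm
      have e12 : c₁ * a ^ n₂ * (b.coord j₂ (ε (n₁ + n₂))) = 0 := by
        have := hcoordP j₂ hj₂ _ h1'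
        rw [map_sub, map_smul, smul_eq_mul, Module.Basis.coord_apply, Module.Basis.repr_self_apply,
          if_neg (Ne.symm hne)] at this
        rw [sub_eq_zero.mp this]
      have e21 : c₂ * a ^ n₁ * (b.coord j₁ (ε (n₁ + n₂))) = 0 := by
        have := hcoordP j₁ hj₁ _ h2'
        rw [map_sub, map_smul, smul_eq_mul, Module.Basis.coord_apply, Module.Basis.repr_self_apply,
          if_neg hne] at this
        rw [sub_eq_zero.mp this]
      have e22 : c₂ * a ^ n₁ * (b.coord j₂ (ε (n₁ + n₂))) = 1 := by
        have := hcoordP j₂ hj₂ _ h2'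
        rw [map_sub, map_smul, smul_eq_mul, Module.Basis.coord_apply, Module.Basis.repr_self_apply,
          if_pos rfl] at this
        exact (sub_eq_zero.mp this).symm
      have dfw := df hSt e11
      have hzero : c₂ * a ^ n₁ = 0 := by
        calc c₂ * a ^ n₁ = c₂ * a ^ n₁ * ((b.coord j₁ (ε (n₁ + n₂))) * (c₁ * a ^ n₂)) := by
              rw [dfw, mul_one]
          _ = (c₂ * a ^ n₁ * (b.coord j₁ (ε (n₁ + n₂)))) * (c₁ * a ^ n₂) := by
              rw [← mul_assoc]
          _ = 0 := by rw [e21, zero_mul]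
      rw [hzero, zero_mul] at e22
      exact zero_ne_one e22
    · push_neg at htwo
      have hdecomp : ∀ w : ℕ →₀ S, w - (b.repr w j₁) • b j₁ ∈ P := by
        intro w
        have hw := b.linearCombination_repr w
        rw [Finsupp.linearCombination_apply, Finsupp.sum] at hw
        by_cases hj : j₁ ∈ (b.repr w).support
        · rw [← Finset.sum_erase_add _ _ hj] at hw
          rw [← eq_sub_of_add_eq hw]
          refine Submodule.sum_mem _ fun i hi => ?_
          refine Submodule.smul_mem _ _ (Submodule.subset_span ?_)
          by_contra hxx
          exact (Finset.ne_of_mem_erase hi) (htwo i hxx)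
        · rw [Finsupp.notMem_support_iff.mp hj, zero_smul, sub_zero, ← hw]
          refine Submodule.sum_mem _ fun i hi => ?_
          refine Submodule.smul_mem _ _ (Submodule.subset_span ?_)
          by_contra hxx
          exact hj ((htwo i hxx) ▸ hi)
      obtain ⟨n, c, hz⟩ := hcyc (b j₁)
      obtain ⟨d, hd'⟩ : ∃ d, b.repr (ε (n+1)) j₁ = d := ⟨_, rfl⟩
      have hd : ε (n+1) - d • b j₁ ∈ P := hd' ▸ hdecomp (ε (n+1))
      have hchain : b j₁ - (c * a * d) • b j₁ ∈ P := by
        have m2 : c • x n ∈ P := Submodule.smul_mem _ _ (Submodule.subset_span ⟨n, rfl⟩)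
        have m3 : (c * a) • (ε (n+1) - d • b j₁) ∈ P := Submodule.smul_mem _ _ hd
        have hadd := Submodule.add_mem _ (Submodule.add_mem _ hz m2) m3
        convert hadd using 1
        show b j₁ - (c * a * d) • b j₁ =
          (b j₁ - c • ε n) + c • (ε n - a • ε (n+1)) + (c * a) • (ε (n+1) - d • b j₁)
        simp only [smul_sub, smul_smul, ← mul_assoc]
        abel
      have hone : c * a * d = 1 := by
        have := hcoordP j₁ hj₁ _ hchain
        rw [map_sub, map_smul, smul_eq_mul, Module.Basis.coord_apply, Module.Basis.repr_self_apply,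
          if_pos rfl, mul_one] at this
        exact (sub_eq_zero.mp this).symm
      have h1 : c * (a * d) = 1 := by rw [← mul_assoc]; exact hone
      have h2 : a * d * c = 1 := df hSt h1
      have h3 : d * (c * a) = 1 := df hSt hone
      refine ⟨⟨a, d * c, ?_, ?_⟩, rfl⟩
      · rw [← mul_assoc]; exact h2
      · rw [mul_assoc]; exact h3
end Dich

section AddNonunit
variable {S : Type u} [Ring S]

lemma add_nonunit (hSt : StHyp S) [Small.{0} S] {p q : S}
    (hp : ¬IsUnit p) (hq : ¬IsUnit q) : ¬IsUnit (p + q) := by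
  intro h
  obtain ⟨x, hx⟩ := h
  have h1 : ((x⁻¹ : Sˣ) * p : S) + ((x⁻¹ : Sˣ) * q : S) = 1 := by
    rw [← mul_add, ← hx, Units.inv_mul]
  have hp' : ¬IsUnit ((x⁻¹ : Sˣ) * p : S) := by
    intro h'
    apply hp
    have hpp : p = (x : S) * ((x⁻¹ : Sˣ) * p : S) := by
      rw [← mul_assoc, Units.mul_inv, one_mul]
    rw [hpp]
    exact x.isUnit.mul h'
  rcases dichotomy hSt ((x⁻¹ : Sˣ) * p : S) with hnil | hun
  · apply hq
    have hqq : ((x⁻¹ : Sˣ) * q : S) = 1 - ((x⁻¹ : Sˣ) * p : S) := eq_sub_of_add_eq' h1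
    have : IsUnit ((x⁻¹ : Sˣ) * q : S) := by rw [hqq]; exact hnil.isUnit_one_sub
    have hqq2 : q = (x : S) * ((x⁻¹ : Sˣ) * q : S) := by
      rw [← mul_assoc, Units.mul_inv, one_mul]
    rw [hqq2]
    exact x.isUnit.mul this
  · exact hp' hun

end AddNonunit


/-- A right Steinitz ring `R` is `G`-dense with respect to every
monoid homomorphism `σ : G → R`. -/
theorem isGDense_of_isRightSteinitz (R : Type*) [Ring R] (hR : IsRightSteinitz R)
    (G : Type*) [Group G] (σ : G →* R) :
    IsGDense G R σ := by
  classical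
  intro F _ _ _ T hσstab hspan
  have hSt : StHyp Rᵐᵒᵖ := hR
  rcases subsingleton_or_nontrivial F with hF | hF
  · exact ⟨PEmpty, Module.Basis.empty F, fun i => i.elim⟩
  -- `F` is nontrivial, so `Rᵐᵒᵖ` is nontrivial and small
  have hntS : Nontrivial Rᵐᵒᵖ := by
    rcases subsingleton_or_nontrivial Rᵐᵒᵖ with hs | hnt
    · exact absurd (Module.subsingleton Rᵐᵒᵖ F) (not_subsingleton_iff_nontrivial.mpr hF)
    · exact hnt
  obtain ⟨i⟩ : Nonempty (Module.Free.ChooseBasisIndex Rᵐᵒᵖ F) := by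
    by_contra hempty
    rw [not_nonempty_iff] at hempty
    have : Subsingleton F := (Module.Free.chooseBasis Rᵐᵒᵖ F).repr.toEquiv.subsingleton
    exact (not_subsingleton_iff_nontrivial.mpr hF) this
  have cb := Module.Free.chooseBasis Rᵐᵒᵖ F
  haveI hsmall : Small.{0} Rᵐᵒᵖ := by
    refine small_of_injective (f := fun c : Rᵐᵒᵖ => c • cb i) ?_
    intro c c' h
    have h2 := congrArg (fun w => cb.repr w i) h
    simpa [Module.Basis.repr_self_apply] using h2
  -- Zorn's lemma: a maximal linearly independent subset of T
  set 𝒮 : Set (Set F) := {s | s ⊆ ↑T ∧ LinearIndependent Rᵐᵒᵖ ((↑) : s → F)} with h𝒮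
  obtain ⟨s, hsmax⟩ : ∃ m, Maximal (· ∈ 𝒮) m := by
    apply zorn_subset
    intro c hc hchain
    refine ⟨⋃₀ c, ⟨Set.sUnion_subset fun u hu => (hc hu).1, ?_⟩,
      fun u hu => Set.subset_sUnion_of_mem hu⟩
    exact linearIndepOn_sUnion_of_directed (v := id) hchain.directedOn fun u hu => (hc hu).2
  have hsT : s ⊆ ↑T := hsmax.prop.1
  have hsind := hsmax.prop.2
  obtain ⟨ι, b, hsb⟩ := hSt F s hsind
  refine ⟨ι, b, ?_⟩
  have hbase : ∀ i, b i ∈ s := by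
    by_contra hnot
    push_neg at hnot
    obtain ⟨i₀, hi₀⟩ := hnot
    -- the submodule of vectors whose coordinates outside `s` are all non-units
    set N : Submodule Rᵐᵒᵖ F :=
      { carrier := {w | ∀ j, b j ∉ s → ¬IsUnit (b.repr w j)}
        add_mem' := by
          intro p q hp hq j hj
          rw [map_add, Finsupp.add_apply]
          exact add_nonunit hSt (hp j hj) (hq j hj)
        zero_mem' := by
          intro j hj
          rw [map_zero, Finsupp.zero_apply]
          exact not_isUnit_zero
        smul_mem' := by
          intro c w hw j hj
          rw [map_smul, Finsupp.smul_apply, smul_eq_mul]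
          exact mul_nonunit hSt (hw j hj) c } with hN
    have hTN : ¬ ((T : Set F) ⊆ (N : Set F)) := by
      intro hsub
      have hle : Submodule.span Rᵐᵒᵖ (T : Set F) ≤ N := Submodule.span_le.mpr hsub
      rw [hspan] at hle
      have hb0 : b i₀ ∈ N := hle Submodule.mem_top
      have := hb0 i₀ hi₀
      rw [Module.Basis.repr_self_apply, if_pos rfl] at this
      exact this isUnit_one
    obtain ⟨t, htT, htN⟩ := Set.not_subset.mp hTN
    have htN' : ∃ j, b j ∉ s ∧ IsUnit (b.repr t j) := by
      by_contra hcon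
      push_neg at hcon
      exact htN fun j hj => hcon j hj
    obtain ⟨i₁, hi₁s, hu⟩ := htN'
    -- t is not in s
    have hts : t ∉ s := by
      intro hts
      obtain ⟨it, hit⟩ := hsb hts
      have hne : it ≠ i₁ := by
        intro h
        exact hi₁s (h ▸ (hit.symm ▸ hts))
      have h0 : b.repr t i₁ = 0 := by
        rw [← hit, Module.Basis.repr_self_apply, if_neg hne]
      rw [h0] at hu
      exact not_isUnit_zero hu
    -- insert t s is independent
    have hins : LinearIndependent Rᵐᵒᵖ (Subtype.val : {y : F // y ∈ insert t s} → F) := by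
      apply (linearIndependent_subtype_iff.trans linearIndepOn_iff).mpr
      intro l hl hl0
      have hsupp := (Finsupp.mem_supported _ l).mp hl
      have hlt : l t = 0 := by
        have happ := congrArg (b.coord i₁) hl0
        rw [map_zero, Finsupp.linearCombination_apply, Finsupp.sum, map_sum] at happ
        have hterms : ∀ y ∈ l.support, y ≠ t → b.coord i₁ (l y • (id y)) = 0 := by
          intro y hy hyt
          have hys : y ∈ s := by
            rcases hsupp hy with h | h
            · exact absurd h hyt
            · exact h
          obtain ⟨iy, hiy⟩ := hsb hys
          have hne : iy ≠ i₁ := by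
            intro h
            exact hi₁s (h ▸ (hiy.symm ▸ hys))
          rw [map_smul, id_eq, ← hiy, Module.Basis.coord_apply, Module.Basis.repr_self_apply, if_neg hne,
            smul_zero]
        rw [Finset.sum_eq_single t hterms (fun hnt => by
          rw [Finsupp.notMem_support_iff.mp hnt, zero_smul, map_zero])] at happ
        rw [map_smul, id_eq, smul_eq_mul, Module.Basis.coord_apply] at happ
        obtain ⟨uu, huu⟩ := hu
        rw [← huu] at happ
        have := congrArg (fun y => y * ((uu⁻¹ : Rᵐᵒᵖˣ) : Rᵐᵒᵖ)) happ
        simpa [mul_assoc] using this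
      have hls : l ∈ Finsupp.supported Rᵐᵒᵖ Rᵐᵒᵖ s := by
        rw [Finsupp.mem_supported]
        intro y hy
        rcases hsupp hy with h | h
        · exact absurd (h ▸ hlt) (Finsupp.mem_support_iff.mp (Finset.mem_coe.mp hy))
        · exact h
      exact ((linearIndependent_subtype_iff.trans linearIndepOn_iff).mp hsind) l hls hl0
    -- contradiction with maximality
    have hmem : insert t s ∈ 𝒮 := ⟨Set.insert_subset htT hsT, hins⟩
    have := hsmax.2 hmem (Set.subset_insert t s)
    exact hts (this (Set.mem_insert t s))
  intro j
  exact hsT (hbase j)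
end

section
/- The ring ℤ[i] of Gaussian integers is not G-dense for the trivial group G: explicitly, taking σ to be the trivial monoid homomorphism from the one-element group to ℤ[i], there exist a free right ℤ[i]-module F and an additive subgroup T of F generating F as an ℤ[i]-module such that no ℤ[i]-basis of F is contained in T. (One may take F = ℤ[i] itself and T = {3a + (2+i)b : a, b ∈ ℤ}.) -/
open MulOpposite

noncomputable def Tmap : ℤ × ℤ →+ GaussianIntᵐᵒᵖ :=
  AddMonoidHom.mk' (fun p => op ((p.1 : GaussianInt) * 3 + (p.2 : GaussianInt) * ⟨2,1⟩))
    (by intro p q; rw [← op_add]; simp only [Prod.fst_add, Prod.snd_add]; push_cast; ring)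

/-- The Gaussian integers `ℤ[i]` are not `G`-dense for the trivial
group `G` (with the trivial homomorphism `σ`): there exist a free right `ℤ[i]`-module
`F` and an additive subgroup `T` generating `F` as an `ℤ[i]`-module, stable under the
(vacuous) action, such that no `ℤ[i]`-basis of `F` lies in `T`. -/
theorem gaussianInt_not_isGDense :
    ¬ IsGDense PUnit GaussianInt 1 := by
  intro h
  have hspan : Submodule.span GaussianIntᵐᵒᵖ ((Tmap.range : AddSubgroup GaussianIntᵐᵒᵖ) : Set GaussianIntᵐᵒᵖ) = ⊤ := by
    rw [eq_top_iff]
    have h3 : op (3 : GaussianInt) ∈ Submodule.span GaussianIntᵐᵒᵖ (Tmap.range : Set GaussianIntᵐᵒᵖ) :=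
      Submodule.subset_span ⟨(1,0), by apply unop_injective; show _ = (3:GaussianInt); decide⟩
    have h5 : op (⟨2,1⟩ : GaussianInt) ∈ Submodule.span GaussianIntᵐᵒᵖ (Tmap.range : Set GaussianIntᵐᵒᵖ) :=
      Submodule.subset_span ⟨(0,1), by apply unop_injective; show _ = (⟨2,1⟩:GaussianInt); decide⟩
    have h1 : (1 : GaussianIntᵐᵒᵖ) ∈ Submodule.span GaussianIntᵐᵒᵖ (Tmap.range : Set GaussianIntᵐᵒᵖ) := by
      have := Submodule.add_mem _ (Submodule.smul_mem _ (op (2 : GaussianInt)) h3)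
        (Submodule.smul_mem _ (op (-(⟨2,-1⟩ : GaussianInt))) h5)
      convert this using 1
      rw [smul_eq_mul, smul_eq_mul, ← op_mul, ← op_mul, ← op_add]; apply unop_injective; decide
    intro x _
    simpa using Submodule.smul_mem _ x h1
  obtain ⟨ι, b, hb⟩ := h GaussianIntᵐᵒᵖ Tmap.range (by simp) hspan
  -- ι has exactly one element
  have hcard : Cardinal.mk ι = 1 := by
    rw [b.mk_eq_rank'', Module.rank_self]
  obtain ⟨hsub, hne⟩ := Cardinal.eq_one_iff_unique.mp hcard
  haveI : Unique ι := uniqueOfSubsingleton hne.some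
  -- b default is a unit
  have hrange : Set.range b = {b default} := by
    ext z
    constructor
    · rintro ⟨i, rfl⟩; rw [Unique.eq_default i]; rfl
    · rintro rfl; exact ⟨default, rfl⟩
  have hmem : (1 : GaussianIntᵐᵒᵖ) ∈ Submodule.span GaussianIntᵐᵒᵖ {b default} := by
    rw [← hrange, b.span_eq]; trivial
  obtain ⟨r, hr⟩ := Submodule.mem_span_singleton.mp hmem
  -- so unop (b default) is a unit in GaussianInt
  have hunit : IsUnit (unop (b default)) := by
    refine IsUnit.of_mul_eq_one (unop r) ?_
    have : unop (r • b default) = unop (1 : GaussianIntᵐᵒᵖ) := by rw [hr]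
    simpa [mul_comm] using this
  -- b default ∈ T
  obtain ⟨⟨a, c⟩, hac⟩ := hb default
  set x := unop (b default) with hx
  have hxeq : x = (a : GaussianInt) * 3 + (c : GaussianInt) * ⟨2,1⟩ := by
    rw [hx, ← hac]; rfl
  -- norm of x is 1
  obtain ⟨y, hy⟩ := hunit.exists_right_inv
  have hnorm : Zsqrtd.norm x = 1 := by
    have h1 : Zsqrtd.norm x * Zsqrtd.norm y = 1 := by
      rw [← Zsqrtd.norm_mul, hy, Zsqrtd.norm_one]
    have h2 : (0:ℤ) ≤ Zsqrtd.norm x := Zsqrtd.norm_nonneg (by norm_num) x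
    have := Int.isUnit_iff.mp (IsUnit.of_mul_eq_one _ h1)
    omega
  -- compute the norm
  have hre : x.re = a * 3 + c * 2 := by rw [hxeq]; simp [Zsqrtd.re_mul]
  have him : x.im = c := by rw [hxeq]; simp [Zsqrtd.im_mul]
  rw [Zsqrtd.norm_def, hre, him] at hnorm
  -- contradiction mod 3
  have h3 : ((a*3+c*2) * (a*3+c*2) - (-1) * c * c : ZMod 3) = 1 := by
    have hn' : (a*3+c*2) * (a*3+c*2) - (-1) * c * c = 1 := hnorm
    have := congrArg (Int.cast : ℤ → ZMod 3) hn'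
    simp only [Int.cast_sub, Int.cast_mul, Int.cast_add, Int.cast_neg, Int.cast_one, Int.cast_ofNat] at this
    exact this
  have key : ∀ w z : ZMod 3, ¬ ((w*3+z*2) * (w*3+z*2) - (-1) * z * z = 1) := by decide
  exact key (a : ZMod 3) (c : ZMod 3) h3
end

section
/- Let A be a commutative ring, let C be a chain complex of A-modules indexed by the natural numbers in which every module C_q is free, and let M be an A-module equipped with an injective A-linear map j : A → M whose cokernel M/j(A) is a flat A-module. Then for every natural number n, the following are equivalent: (i) the homology modules H_i(C) vanish for all 0 ≤ i ≤ n; (ii) the homology modules H_i(C ⊗_A M) of the complex obtained by tensoring C degreewise with M over A vanish for all 0 ≤ i ≤ n. -/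
open CategoryTheory CategoryTheory.Limits CategoryTheory.MonoidalCategory

section ChaseLemmas

open LinearMap TensorProduct

variable {R : Type} [CommRing R] {M : Type} [AddCommGroup M] [Module R M]

private lemma aux_tmul_inj (j : R →ₗ[R] M) (hj : Function.Injective j)
    (F : Type) [AddCommGroup F] [Module R F] [Module.Flat R F]
    {x y : F} (h : x ⊗ₜ[R] j 1 = y ⊗ₜ[R] j 1) : x = y := by
  have h1 : (j.lTensor F) (x ⊗ₜ[R] (1 : R)) = (j.lTensor F) (y ⊗ₜ[R] (1 : R)) := by
    simpa [LinearMap.lTensor_tmul] using h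
  have h2 := Module.Flat.lTensor_preserves_injective_linearMap (M := F) j hj h1
  have h3 : (TensorProduct.rid R F) (x ⊗ₜ[R] (1 : R)) =
      (TensorProduct.rid R F) (y ⊗ₜ[R] (1 : R)) := by rw [h2]
  simpa using h3

private lemma pi_j_one (j : R →ₗ[R] M) :
    (LinearMap.range j).mkQ (j 1) = 0 := by
  rw [Submodule.mkQ_apply, Submodule.Quotient.mk_eq_zero]
  exact ⟨1, rfl⟩

variable {F₁ F₀ F₂ : Type}
  [AddCommGroup F₁] [Module R F₁] [Module.Flat R F₁]
  [AddCommGroup F₀] [Module R F₀] [Module.Flat R F₀]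
  [AddCommGroup F₂] [Module R F₂] [Module.Flat R F₂]
  {f : F₁ →ₗ[R] F₀} {g : F₀ →ₗ[R] F₂}

set_option linter.unusedSectionVars false in
set_option maxHeartbeats 1000000 in
private lemma chase_fwd (j : R →ₗ[R] M) (hj : Function.Injective j)
    (hflat : Module.Flat R (M ⧸ LinearMap.range j)) (hex : Function.Exact f g) :
    Function.Exact (f.rTensor M) (g.rTensor M) := by
  set Q := M ⧸ LinearMap.range j with hQ
  set π : M →ₗ[R] Q := (LinearMap.range j).mkQ with hπ
  haveI : Module.Flat R Q := hflat
  intro t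
  constructor
  · intro ht
    -- t̄ := lTensor π t satisfies rTensor Q g t̄ = 0
    have comm2 : (g.rTensor Q) ∘ₗ (π.lTensor F₀) = (π.lTensor F₂) ∘ₗ (g.rTensor M) := by
      rw [LinearMap.rTensor_comp_lTensor, LinearMap.lTensor_comp_rTensor]
    have h1 : (g.rTensor Q) ((π.lTensor F₀) t) = 0 := by
      have := LinearMap.congr_fun comm2 t
      simp only [LinearMap.comp_apply] at this
      rw [this, ht, map_zero]
    have hexQ : Function.Exact (f.rTensor Q) (g.rTensor Q) :=
      Module.Flat.rTensor_exact Q hex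
    obtain ⟨s₂, hs₂⟩ := (hexQ _).mp h1
    obtain ⟨s, rfl⟩ := LinearMap.lTensor_surjective F₁
      (Submodule.mkQ_surjective (LinearMap.range j)) s₂
    -- t - rTensor f s is killed by lTensor π
    have comm3 : (π.lTensor F₀) ∘ₗ (f.rTensor M) = (f.rTensor Q) ∘ₗ (π.lTensor F₁) := by
      rw [LinearMap.rTensor_comp_lTensor, LinearMap.lTensor_comp_rTensor]
    have h5 : (π.lTensor F₀) (t - f.rTensor M s) = 0 := by
      have := LinearMap.congr_fun comm3 s
      simp only [LinearMap.comp_apply] at this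
      rw [map_sub, this, hs₂, sub_self]
    have hexM : Function.Exact (j.lTensor F₀) (π.lTensor F₀) :=
      Module.Flat.lTensor_exact F₀ (LinearMap.exact_map_mkQ_range j)
    obtain ⟨v₀, hv₀⟩ := (hexM _).mp h5
    set v : F₀ := (TensorProduct.rid R F₀) v₀ with hv
    have hv₀' : v₀ = v ⊗ₜ[R] (1 : R) := by
      apply (TensorProduct.rid R F₀).injective
      simp [hv]
    have hjv : (j.lTensor F₀) v₀ = v ⊗ₜ[R] j 1 := by
      rw [hv₀', LinearMap.lTensor_tmul]
    -- g v = 0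
    have hgv0 : g v ⊗ₜ[R] j 1 = (0 : F₂ ⊗[R] M) := by
      have hc : g.rTensor M (t - f.rTensor M s) = 0 := by
        rw [map_sub, ht]
        have : (g.rTensor M) ((f.rTensor M) s) = ((g ∘ₗ f).rTensor M) s := by
          rw [LinearMap.rTensor_comp]; rfl
        rw [this, hex.linearMap_comp_eq_zero]
        simp
      calc g v ⊗ₜ[R] j 1 = (g.rTensor M) (v ⊗ₜ[R] j 1) := by rw [LinearMap.rTensor_tmul]
        _ = (g.rTensor M) ((j.lTensor F₀) v₀) := by rw [hjv]
        _ = (g.rTensor M) (t - f.rTensor M s) := by rw [hv₀]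
        _ = 0 := hc
    have hgv : g v = 0 := by
      have : g v ⊗ₜ[R] j 1 = (0 : F₂) ⊗ₜ[R] j 1 := by rw [hgv0, TensorProduct.zero_tmul]
      exact aux_tmul_inj j hj F₂ this
    obtain ⟨u, hu⟩ := (hex v).mp hgv
    refine ⟨s + u ⊗ₜ[R] j 1, ?_⟩
    rw [map_add, LinearMap.rTensor_tmul, hu]
    rw [← hjv, hv₀]
    abel
  · rintro ⟨y, rfl⟩
    have : (g.rTensor M) ((f.rTensor M) y) = ((g ∘ₗ f).rTensor M) y := by
      rw [LinearMap.rTensor_comp]; rfl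
    rw [this, hex.linearMap_comp_eq_zero]
    simp

set_option linter.unusedSectionVars false in
set_option maxHeartbeats 1000000 in
private lemma chase_bwd (j : R →ₗ[R] M) (hj : Function.Injective j)
    (hflat : Module.Flat R (M ⧸ LinearMap.range j)) (hcomp : g ∘ₗ f = 0)
    (hex : Function.Exact (f.rTensor M) (g.rTensor M)) :
    Function.Exact f g := by
  set Q := M ⧸ LinearMap.range j with hQ
  set π : M →ₗ[R] Q := (LinearMap.range j).mkQ with hπ
  haveI : Module.Flat R Q := hflat
  intro x
  constructor
  · intro hx
    have h0 : (g.rTensor M) (x ⊗ₜ[R] j 1) = 0 := by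
      rw [LinearMap.rTensor_tmul, hx, TensorProduct.zero_tmul]
    obtain ⟨y, hy⟩ := (hex _).mp h0
    -- push to Q
    have comm3 : (π.lTensor F₀) ∘ₗ (f.rTensor M) = (f.rTensor Q) ∘ₗ (π.lTensor F₁) := by
      rw [LinearMap.rTensor_comp_lTensor, LinearMap.lTensor_comp_rTensor]
    have h1 : (f.rTensor Q) ((π.lTensor F₁) y) = 0 := by
      have := LinearMap.congr_fun comm3 y
      simp only [LinearMap.comp_apply] at this
      rw [← this, hy, LinearMap.lTensor_tmul, pi_j_one j, TensorProduct.tmul_zero]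
    have hexQ : Function.Exact ((LinearMap.ker f).subtype.rTensor Q) (f.rTensor Q) :=
      Module.Flat.rTensor_exact Q (LinearMap.exact_subtype_ker_map f)
    obtain ⟨z, hz⟩ := (hexQ _).mp h1
    obtain ⟨w, rfl⟩ := LinearMap.lTensor_surjective (LinearMap.ker f)
      (Submodule.mkQ_surjective (LinearMap.range j)) z
    have comm4 : (π.lTensor F₁) ∘ₗ ((LinearMap.ker f).subtype.rTensor M) =
        ((LinearMap.ker f).subtype.rTensor Q) ∘ₗ (π.lTensor (LinearMap.ker f)) := by
      rw [LinearMap.rTensor_comp_lTensor, LinearMap.lTensor_comp_rTensor]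
    have h5 : (π.lTensor F₁) (y - (LinearMap.ker f).subtype.rTensor M w) = 0 := by
      have := LinearMap.congr_fun comm4 w
      simp only [LinearMap.comp_apply] at this
      rw [map_sub, this, hz, sub_self]
    have hexM : Function.Exact (j.lTensor F₁) (π.lTensor F₁) :=
      Module.Flat.lTensor_exact F₁ (LinearMap.exact_map_mkQ_range j)
    obtain ⟨u₀, hu₀⟩ := (hexM _).mp h5
    set u : F₁ := (TensorProduct.rid R F₁) u₀ with hu
    have hu₀' : u₀ = u ⊗ₜ[R] (1 : R) := by
      apply (TensorProduct.rid R F₁).injective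
      simp [hu]
    have hju : (j.lTensor F₁) u₀ = u ⊗ₜ[R] j 1 := by
      rw [hu₀', LinearMap.lTensor_tmul]
    refine ⟨u, ?_⟩
    have hfw : (f.rTensor M) ((LinearMap.ker f).subtype.rTensor M w) = 0 := by
      have : (f.rTensor M) ∘ₗ ((LinearMap.ker f).subtype.rTensor M) =
          ((f ∘ₗ (LinearMap.ker f).subtype).rTensor M) := by
        rw [LinearMap.rTensor_comp]
      have h' := LinearMap.congr_fun this w
      simp only [LinearMap.comp_apply] at h'
      rw [h', LinearMap.comp_ker_subtype]
      simp
    have : f u ⊗ₜ[R] j 1 = x ⊗ₜ[R] j 1 := by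
      calc f u ⊗ₜ[R] j 1 = (f.rTensor M) (u ⊗ₜ[R] j 1) := by rw [LinearMap.rTensor_tmul]
        _ = (f.rTensor M) (y - (LinearMap.ker f).subtype.rTensor M w) := by rw [← hju, hu₀]
        _ = (f.rTensor M) y := by rw [map_sub, hfw, sub_zero]
        _ = x ⊗ₜ[R] j 1 := hy
    exact aux_tmul_inj j hj F₀ this
  · rintro ⟨u, rfl⟩
    exact LinearMap.congr_fun hcomp u

end ChaseLemmas

/-- Let `A` be a commutative ring, `C` a chain complex of free
`A`-modules indexed by `ℕ`, and `M` an `A`-module with an injective `A`-linear map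
`j : A → M` whose cokernel is flat. Then for every `n`, the homology of `C` vanishes
in degrees `0, …, n` if and only if the homology of `C ⊗_A M` vanishes in degrees
`0, …, n`. -/
theorem homology_vanishing_iff_tensor
    (A : Type) [CommRing A] (C : ChainComplex (ModuleCat A) ℕ)
    (hfree : ∀ q : ℕ, Module.Free A (C.X q))
    (M : Type) [AddCommGroup M] [Module A M]
    (j : A →ₗ[A] M) (hj : Function.Injective j)
    (hflat : Module.Flat A (M ⧸ LinearMap.range j)) (n : ℕ) :
    (∀ i ≤ n, IsZero (C.homology i)) ↔
    (∀ i ≤ n, IsZero ((((tensorRight (ModuleCat.of A M)).mapHomologicalComplex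
      (ComplexShape.down ℕ)).obj C).homology i)) := by
  have key : ∀ i : ℕ, IsZero (C.homology i) ↔
      IsZero ((((tensorRight (ModuleCat.of A M)).mapHomologicalComplex
        (ComplexShape.down ℕ)).obj C).homology i) := by
    intro i
    haveI f1 : Module.Free A ((C.sc i).X₁ : Type) := hfree ((ComplexShape.down ℕ).prev i)
    haveI f2 : Module.Free A ((C.sc i).X₂ : Type) := hfree i
    haveI f3 : Module.Free A ((C.sc i).X₃ : Type) := hfree ((ComplexShape.down ℕ).next i)
    have e1 : IsZero (C.homology i) ↔ (C.sc i).Exact :=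
      (ShortComplex.exact_iff_isZero_homology _).symm
    have e2 : IsZero ((((tensorRight (ModuleCat.of A M)).mapHomologicalComplex
        (ComplexShape.down ℕ)).obj C).homology i) ↔
        ((C.sc i).map (tensorRight (ModuleCat.of A M))).Exact :=
      (ShortComplex.exact_iff_isZero_homology _).symm
    rw [e1, e2, ShortComplex.ShortExact.moduleCat_exact_iff_function_exact,
      ShortComplex.ShortExact.moduleCat_exact_iff_function_exact]
    constructor
    · intro h
      exact chase_fwd (F₁ := (C.sc i).X₁) (F₀ := (C.sc i).X₂) (F₂ := (C.sc i).X₃)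
        j hj hflat h
    · intro h
      refine chase_bwd (F₁ := (C.sc i).X₁) (F₀ := (C.sc i).X₂) (F₂ := (C.sc i).X₃)
        j hj hflat ?_ h
      exact congrArg ModuleCat.Hom.hom (C.sc i).zero
  exact ⟨fun H i hi => (key i).mp (H i hi), fun H i hi => (key i).mpr (H i hi)⟩
end
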